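/- arXiv:1104.3335 — 3 statements merged into one kernel-verified Lean document; each statement's English description precedes it below -/
import Mathlib

section
/- Let p be a prime and let D = {D_n} be a proper dual family of sets of functions F_p^n → F_p. For every ε > 0 and η > 0 there exists n_0 such that for every n ≥ n_0 and every distributional function Γ : F_p^n → P(F_p), if F is a random function sampled from Γ (independently at each point), then Pr_F[ |‖e_p(F)‖_{u(D_n)} − ‖e_p(Γ)‖_{u(D_n)}| ≥ ε ] ≤ η. -/
open Filter Topology

noncomputable section

namespace Paper

/-- The average (expectation) of a complex-valued function over a finite type. -/
def expC {α : Type*} [Fintype α] (f : α → ℂ) : ℂ := (∑ x, f x) / (Fintype.card α : ℂ)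

/-- The average (expectation) of a real-valued function over a finite type. -/
def expR {α : Type*} [Fintype α] (f : α → ℝ) : ℝ := (∑ x, f x) / (Fintype.card α : ℝ)

variable (p : ℕ) [NeZero p]

/-- `e_p(m) = exp(2 π i m / p)`. -/
def ep (m : ZMod p) : ℂ :=
  Complex.exp (2 * (Real.pi : ℂ) * Complex.I * (m.val : ℂ) / (p : ℂ))

/-- The Gowers uniformity norm `‖f‖_{U^k}` of `f : F_p^n → ℂ`. -/
def gowersNorm (n k : ℕ) (f : (Fin n → ZMod p) → ℂ) : ℝ :=
  (‖expC (fun xy : (Fin n → ZMod p) × (Fin k → Fin n → ZMod p) =>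
      ∏ S : Finset (Fin k),
        (fun z => (starRingEnd ℂ) z)^[k - S.card] (f (xy.1 + ∑ i ∈ S, xy.2 i)))‖) ^
    (((2 : ℝ) ^ k)⁻¹)

/-- Inner product `⟨f, g⟩ = 𝔼[f ⬝ conj g]`. -/
def inn (n : ℕ) (f g : (Fin n → ZMod p) → ℂ) : ℂ :=
  expC (fun x => f x * (starRingEnd ℂ) (g x))

/-- Correlation norm `‖f‖_{u(D)}` for a set `D` of complex-valued functions. -/
def uNormC (n : ℕ) (D : Set ((Fin n → ZMod p) → ℂ)) (f : (Fin n → ZMod p) → ℂ) : ℝ :=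
  ⨆ g ∈ D, ‖inn p n f g‖

/-- Correlation norm `‖f‖_{u(D)}` for a set `D` of `F_p`-valued functions. -/
def uNormF (n : ℕ) (D : Set ((Fin n → ZMod p) → ZMod p)) (f : (Fin n → ZMod p) → ℂ) : ℝ :=
  ⨆ g ∈ D, ‖inn p n f (fun x => ep p (g x))‖

/-- The bias of `f : F_p^n → F_p`. -/
def biasF (n : ℕ) (f : (Fin n → ZMod p) → ZMod p) : ℝ :=
  ‖expC (fun x => ep p (f x))‖

/-- Evaluation of a linear form `L ∈ F_p^k` at `X ∈ (F_p^n)^k`. -/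
def applyLF (n k : ℕ) (L : Fin k → ZMod p) (X : Fin k → Fin n → ZMod p) :
    Fin n → ZMod p := ∑ i, L i • X i

/-- `t_𝓛(f)` for a system of linear forms given as a tuple `L`. -/
def tL (n k m : ℕ) (L : Fin m → Fin k → ZMod p) (f : (Fin n → ZMod p) → ℂ) : ℂ :=
  expC (fun X : Fin k → Fin n → ZMod p => ∏ i, f (applyLF p n k (L i) X))

/-- `t_𝓛(f)` for a real-valued function. -/
def tLR (n k m : ℕ) (L : Fin m → Fin k → ZMod p) (f : (Fin n → ZMod p) → ℝ) : ℝ :=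
  expR (fun X : Fin k → Fin n → ZMod p => ∏ i, f (applyLF p n k (L i) X))

/-- `t_{𝓛,α}(f)`, the average with conjugations `α`. -/
def tLA (n k m : ℕ) (L : Fin m → Fin k → ZMod p) (α : Fin m → Bool)
    (f : (Fin n → ZMod p) → ℂ) : ℂ :=
  expC (fun X : Fin k → Fin n → ZMod p =>
    ∏ i, if α i then (starRingEnd ℂ) (f (applyLF p n k (L i) X))
      else f (applyLF p n k (L i) X))

/-- `t*_{𝓛,β}(f)`, the average with coefficients `β ∈ F_p^m`. -/
def tLstar (n k m : ℕ) (L : Fin m → Fin k → ZMod p) (β : Fin m → ZMod p)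
    (f : (Fin n → ZMod p) → ZMod p) : ℂ :=
  expC (fun X : Fin k → Fin n → ZMod p => ep p (∑ i, β i * f (applyLF p n k (L i) X)))

/-- A system of linear forms is homogeneous if, for uniform `X`, the joint distribution of
`(L₁(X),…,L_m(X))` is invariant under simultaneous translation by any constant `c`. -/
def IsHomogeneous (k m : ℕ) (L : Fin m → Fin k → ZMod p) : Prop :=
  ∀ (n : ℕ) (c : Fin n → ZMod p) (y : Fin m → Fin n → ZMod p),
    {X : Fin k → Fin n → ZMod p | ∀ i, applyLF p n k (L i) X = y i}.ncard =
    {X : Fin k → Fin n → ZMod p | ∀ i, applyLF p n k (L i) X + c = y i}.ncard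

/-- Cauchy–Schwarz complexity at most `s`. -/
def CSComplexityLE (k m : ℕ) (L : Fin m → Fin k → ZMod p) (s : ℕ) : Prop :=
  ∀ i : Fin m, ∃ φ : Fin m → Fin (s + 1), ∀ c : Fin (s + 1),
    L i ∉ Submodule.span (ZMod p) (L '' {j | j ≠ i ∧ φ j = c})

/-- True complexity at most `d`. -/
def TrueComplexityLE (k m : ℕ) (L : Fin m → Fin k → ZMod p) (d : ℕ) : Prop :=
  ∀ ε : ℝ, 0 < ε → ∃ δ : ℝ, 0 < δ ∧ ∀ (n : ℕ) (f : (Fin n → ZMod p) → ℂ),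
    (∀ x, ‖f x‖ ≤ 1) → gowersNorm p n (d + 1) f ≤ δ →
      ‖tL p n k m L f‖ ≤ ε

/-- True complexity exactly `d`. -/
def TrueComplexityEq (k m : ℕ) (L : Fin m → Fin k → ZMod p) (d : ℕ) : Prop :=
  TrueComplexityLE p k m L d ∧ ∀ e, e < d → ¬ TrueComplexityLE p k m L e

/-- Iterated additive derivative of `P : F_p^n → F_p` in a list of directions. -/
def derivList (n : ℕ) :
    List (Fin n → ZMod p) → ((Fin n → ZMod p) → ZMod p) → ((Fin n → ZMod p) → ZMod p)
  | [], P => P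
  | y :: ys, P => derivList n ys (fun x => P (x + y) - P x)

/-- `P` is a polynomial of degree at most `d`: all `(d+1)`-fold derivatives vanish. -/
def DegLE (n : ℕ) (P : (Fin n → ZMod p) → ZMod p) (d : ℕ) : Prop :=
  ∀ ys : List (Fin n → ZMod p), ys.length = d + 1 → derivList p n ys P = 0

/-- `P` is a polynomial of degree exactly `d`. -/
def DegEq (n : ℕ) (P : (Fin n → ZMod p) → ZMod p) (d : ℕ) : Prop :=
  DegLE p n P d ∧ ∀ e, e < d → ¬ DegLE p n P e

/-- `rank(P) > r`: `P` cannot be written as a function of `r` polynomials of degree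
at most `deg(P) − 1`. -/
def RankGT (n : ℕ) (P : (Fin n → ZMod p) → ZMod p) (r : ℕ) : Prop :=
  ∀ d : ℕ, DegEq p n P d →
    ¬ ∃ (Q : Fin r → (Fin n → ZMod p) → ZMod p) (Γ : (Fin r → ZMod p) → ZMod p),
      (∀ i, DegLE p n (Q i) (d - 1)) ∧ ∀ x, P x = Γ (fun i => Q i x)

/-- `rank(P) ≥ r`. -/
def RankGE (n : ℕ) (P : (Fin n → ZMod p) → ZMod p) (r : ℕ) : Prop :=
  ∀ r' : ℕ, r' < r → RankGT p n P r'

/-- Extension of a function on `F_p^n` to `F_p^m` (`m ≥ n`) by ignoring the extra coordinates. -/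
def extendFun {β : Type*} {n m : ℕ} (h : n ≤ m) (g : (Fin n → ZMod p) → β) :
    (Fin m → ZMod p) → β := fun x => g (fun i => x (Fin.castLE h i))

/-- (A1) Consistency for `F_p`-valued families. -/
def ConsistentF (D : ∀ n : ℕ, Set ((Fin n → ZMod p) → ZMod p)) : Prop :=
  ∀ (n m : ℕ) (h : n ≤ m), ∀ g ∈ D n, extendFun p h g ∈ D m

/-- Consistency for unit-disc-valued families: `D_n ⊆ D_{n+1}`. -/
def ConsistentC (D : ∀ n : ℕ, Set ((Fin n → ZMod p) → ℂ)) : Prop :=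
  ∀ n : ℕ, ∀ g ∈ D n, extendFun p (Nat.le_succ n) g ∈ D (n + 1)

/-- (A2) Affine invariance. -/
def AffineInvariant (D : ∀ n : ℕ, Set ((Fin n → ZMod p) → ZMod p)) : Prop :=
  ∀ n : ℕ, ∀ g ∈ D n,
    ∀ (T : (Fin n → ZMod p) ≃ₗ[ZMod p] (Fin n → ZMod p)) (c : Fin n → ZMod p),
      (fun x => g (T x + c)) ∈ D n

/-- (A3) Sparsity: `|D_n| ≤ p^{ε p^n}` for every `ε > 0` and all large enough `n`. -/
def Sparse (D : ∀ n : ℕ, Set ((Fin n → ZMod p) → ZMod p)) : Prop :=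
  ∀ ε : ℝ, 0 < ε → ∃ n₀ : ℕ, ∀ n, n₀ ≤ n →
    (Nat.card (D n) : ℝ) ≤ (p : ℝ) ^ (ε * (p : ℝ) ^ n)

/-- A proper dual family: consistent, affine invariant and sparse. -/
def ProperDual (D : ∀ n : ℕ, Set ((Fin n → ZMod p) → ZMod p)) : Prop :=
  ConsistentF p D ∧ AffineInvariant p D ∧ Sparse p D

/-- The family `D` is correlation testable with `q` queries. -/
def CorrTestable (q : ℕ) (D : ∀ n : ℕ, Set ((Fin n → ZMod p) → ZMod p)) : Prop :=
  ∃ (Γ : (Fin q → ZMod p) → Bool) (μ : ∀ n : ℕ, (Fin q → Fin n → ZMod p) → ℝ),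
    (∀ n x, 0 ≤ μ n x) ∧ (∀ n, ∑ x, μ n x = 1) ∧
    ∀ ε : ℝ, 0 < ε → ∃ (δ θm θp : ℝ) (n₀ : ℕ),
      0 < δ ∧ δ < ε ∧ 0 ≤ θm ∧ θm < θp ∧ θp ≤ 1 ∧
      ∀ n, n₀ < n → ∀ f : (Fin n → ZMod p) → ZMod p,
        (ε ≤ uNormF p n (D n) (fun x => ep p (f x)) →
          θp ≤ ∑ x, μ n x * (if Γ (fun i => f (x i)) = true then 1 else 0)) ∧
        (uNormF p n (D n) (fun x => ep p (f x)) ≤ δ →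
          (∑ x, μ n x * (if Γ (fun i => f (x i)) = true then 1 else 0)) ≤ θm)

/-- Strong correlation testability by linear systems with true complexity `d` and
Cauchy–Schwarz complexity `s`. -/
def StronglyCorrTestable (D : ∀ n : ℕ, Set ((Fin n → ZMod p) → ℂ))
    (d s : ℕ) : Prop :=
  ∀ ε : ℝ, 0 < ε → ∃ (δ : ℝ) (n₀ ℓ : ℕ) (kk mm : Fin ℓ → ℕ)
      (L : ∀ i, Fin (mm i) → Fin (kk i) → ZMod p) (α : ∀ i, Fin (mm i) → Bool),
    0 < δ ∧ δ < ε ∧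
    (∀ i, Function.Injective (L i)) ∧
    (∀ i, IsHomogeneous p (kk i) (mm i) (L i)) ∧
    (∀ i, TrueComplexityLE p (kk i) (mm i) (L i) d) ∧
    (∀ i, CSComplexityLE p (kk i) (mm i) (L i) s) ∧
    Disjoint
      (closure {v : Fin ℓ → ℂ | ∃ (n : ℕ) (f : (Fin n → ZMod p) → ℂ),
        n₀ ≤ n ∧ (∀ x, ‖f x‖ ≤ 1) ∧ ε ≤ uNormC p n (D n) f ∧
        v = fun i => tLA p n (kk i) (mm i) (L i) (α i) f})
      (closure {v : Fin ℓ → ℂ | ∃ (n : ℕ) (f : (Fin n → ZMod p) → ℂ),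
        n₀ ≤ n ∧ (∀ x, ‖f x‖ ≤ 1) ∧ uNormC p n (D n) f ≤ δ ∧
        v = fun i => tLA p n (kk i) (mm i) (L i) (α i) f})

/-- `k ∈ S(D)`: there are polynomials of degree exactly `k` and arbitrarily high rank
with noticeable correlation with `D`. -/
def memS (D : ∀ n : ℕ, Set ((Fin n → ZMod p) → ℂ)) (k : ℕ) : Prop :=
  1 ≤ k ∧ ∀ r : ℕ → ℕ, Monotone r → ∃ n₀ a : ℕ, ∀ n, n₀ ≤ n →
    ∃ P : (Fin n → ZMod p) → ZMod p, DegEq p n P k ∧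
      (1 : ℝ) / (a : ℝ) ≤ uNormC p n (D n) (fun x => ep p (P x)) ∧
      RankGT p n P (r a)

/-- `Γ x` is a probability distribution on `F_p` for every `x`. -/
def IsDist (n : ℕ) (Γ : (Fin n → ZMod p) → ZMod p → ℝ) : Prop :=
  (∀ x c, 0 ≤ Γ x c) ∧ ∀ x, ∑ c, Γ x c = 1

/-- `a_c(μ) = E_{z ∼ μ}[e_p(c z)]`. -/
def aC (c : ZMod p) (μ : ZMod p → ℝ) : ℂ :=
  ∑ z : ZMod p, (μ z : ℂ) * ep p (c * z)

/-- `t*_{𝓛,β}(Γ)` for a distributional function `Γ`. -/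
def tLstarDist (n k m : ℕ) (L : Fin m → Fin k → ZMod p) (β : Fin m → ZMod p)
    (Γ : (Fin n → ZMod p) → ZMod p → ℝ) : ℂ :=
  expC (fun X : Fin k → Fin n → ZMod p => ∏ i, aC p (β i) (Γ (applyLF p n k (L i) X)))

/-- The probability of sampling the function `F` from the distributional function `Γ`
(independently at each point). -/
def probFun (n : ℕ) (Γ : (Fin n → ZMod p) → ZMod p → ℝ)
    (F : (Fin n → ZMod p) → ZMod p) : ℝ :=
  ∏ x, Γ x (F x)

/-- Conditional expectation of a distributional function w.r.t. the polynomial factor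
defined by `P₁, …, P_C`. -/
def condExpDist (n C : ℕ) (P : Fin C → (Fin n → ZMod p) → ZMod p)
    (Γ : (Fin n → ZMod p) → ZMod p → ℝ) : (Fin n → ZMod p) → ZMod p → ℝ :=
  fun x c =>
    (∑ y ∈ Finset.univ.filter (fun y : Fin n → ZMod p => ∀ j, P j y = P j x), Γ y c) /
    ((Finset.univ.filter (fun y : Fin n → ZMod p => ∀ j, P j y = P j x)).card : ℝ)

/-- Connectivity of a system of linear forms given as a tuple. -/
def ConnectedSystem (k m : ℕ) (L : Fin m → Fin k → ZMod p) : Prop :=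
  ∀ S : Finset (Fin m), S.Nonempty → S ≠ Finset.univ →
    Submodule.span (ZMod p) (L '' ↑S) ⊓ Submodule.span (ZMod p) (L '' ↑(Sᶜ)) ≠ ⊥

/-- Isomorphism of two systems of linear forms (given as injective tuples):
a bijection preserving all linear relations, i.e. extending to an invertible linear map
between the spans. -/
def SystemsIso {k₁ m₁ k₂ m₂ : ℕ}
    (L₁ : Fin m₁ → Fin k₁ → ZMod p) (L₂ : Fin m₂ → Fin k₂ → ZMod p) : Prop :=
  ∃ σ : Fin m₁ ≃ Fin m₂, ∀ c : Fin m₁ → ZMod p,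
    (∑ i, c i • L₁ i) = 0 ↔ (∑ i, c i • L₂ (σ i)) = 0

/-- Connectivity of a system of linear forms given as a finite set. -/
def ConnectedFinset {k : ℕ} (𝓛 : Finset (Fin k → ZMod p)) : Prop :=
  ∀ S : Finset (Fin k → ZMod p), S ⊆ 𝓛 → S.Nonempty → S ≠ 𝓛 →
    Submodule.span (ZMod p) (S : Set (Fin k → ZMod p)) ⊓
      Submodule.span (ZMod p) ((𝓛 \ S : Finset (Fin k → ZMod p)) : Set (Fin k → ZMod p)) ≠ ⊥

/-- Isomorphism of two systems of linear forms given as finite sets. -/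
def FinsetIso {k₁ k₂ : ℕ}
    (A : Finset (Fin k₁ → ZMod p)) (B : Finset (Fin k₂ → ZMod p)) : Prop :=
  ∃ e : {x // x ∈ A} ≃ {x // x ∈ B}, ∀ c : {x // x ∈ A} → ZMod p,
    (∑ x : {x // x ∈ A}, c x • (x : Fin k₁ → ZMod p)) = 0 ↔
    (∑ x : {x // x ∈ A}, c x • ((e x : Fin k₂ → ZMod p))) = 0

/-- Isomorphism of two 1-flagged systems of linear forms: a relation-preserving bijection
whose linear extension carries one flag to the other. -/
def FlaggedIso {k₁ k₂ : ℕ}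
    (A : Finset (Fin k₁ → ZMod p)) (M₁ : Fin k₁ → ZMod p)
    (B : Finset (Fin k₂ → ZMod p)) (M₂ : Fin k₂ → ZMod p) : Prop :=
  ∃ e : {x // x ∈ A} ≃ {x // x ∈ B},
    (∀ c : {x // x ∈ A} → ZMod p,
      (∑ x : {x // x ∈ A}, c x • (x : Fin k₁ → ZMod p)) = 0 ↔
      (∑ x : {x // x ∈ A}, c x • ((e x : Fin k₂ → ZMod p))) = 0) ∧
    (∀ c : {x // x ∈ A} → ZMod p,
      (∑ x : {x // x ∈ A}, c x • (x : Fin k₁ → ZMod p)) = M₁ →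
      (∑ x : {x // x ∈ A}, c x • ((e x : Fin k₂ → ZMod p))) = M₂)

/-- The underlying (unflagged) system of the product of two 1-flagged systems,
relative to the chosen surjection `T`. -/
def productSystem {k₀ k₁ : ℕ}
    (𝓛₀ : Finset (Fin k₀ → ZMod p)) (𝓛₁ : Finset (Fin k₁ → ZMod p))
    (T : (Fin (k₀ + k₁) → ZMod p) →ₗ[ZMod p] (Fin (k₀ + k₁ - 1) → ZMod p)) :
    Finset (Fin (k₀ + k₁ - 1) → ZMod p) :=
  (𝓛₀.image (fun L => Fin.append L (0 : Fin k₁ → ZMod p)) ∪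
    𝓛₁.image (fun L => Fin.append (0 : Fin k₀ → ZMod p) L)).image (fun v => T v)

/-- `f^{(𝓛∖{Lᵢ})^{Lᵢ}}(x)`: conditional average of `∏_{j ≠ i} f(L_j(X))` given `Lᵢ(X) = x`. -/
def flagCondAvg (n k m : ℕ) (L : Fin m → Fin k → ZMod p) (i : Fin m)
    (f : (Fin n → ZMod p) → ℂ) (x : Fin n → ZMod p) : ℂ :=
  (∑ X ∈ Finset.univ.filter (fun X : Fin k → Fin n → ZMod p => applyLF p n k (L i) X = x),
      ∏ j ∈ Finset.univ.erase i, f (applyLF p n k (L j) X)) /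
  (((Finset.univ.filter
      (fun X : Fin k → Fin n → ZMod p => applyLF p n k (L i) X = x)).card : ℂ))

/-- `f^{∂𝓛}(x) = Σ_{L ∈ 𝓛} f^{(𝓛∖{L})^L}(x)`. -/
def partialL (n k m : ℕ) (L : Fin m → Fin k → ZMod p)
    (f : (Fin n → ZMod p) → ℂ) (x : Fin n → ZMod p) : ℂ :=
  ∑ i, flagCondAvg p n k m L i f x

/-- Real-valued version of `flagCondAvg`. -/
def flagCondAvgR (n k m : ℕ) (L : Fin m → Fin k → ZMod p) (i : Fin m)
    (f : (Fin n → ZMod p) → ℝ) (x : Fin n → ZMod p) : ℝ :=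
  (∑ X ∈ Finset.univ.filter (fun X : Fin k → Fin n → ZMod p => applyLF p n k (L i) X = x),
      ∏ j ∈ Finset.univ.erase i, f (applyLF p n k (L j) X)) /
  (((Finset.univ.filter
      (fun X : Fin k → Fin n → ZMod p => applyLF p n k (L i) X = x)).card : ℝ))

/-- Real-valued version of `partialL`. -/
def partialLR (n k m : ℕ) (L : Fin m → Fin k → ZMod p)
    (f : (Fin n → ZMod p) → ℝ) (x : Fin n → ZMod p) : ℝ :=
  ∑ i, flagCondAvgR p n k m L i f x

/-- `t_𝓛` viewed as a formal polynomial in the variables `{f(x) : x ∈ F_p^n}`. -/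
def tLPoly (n k m : ℕ) (L : Fin m → Fin k → ZMod p) :
    MvPolynomial (Fin n → ZMod p) ℂ :=
  MvPolynomial.C (((p : ℂ) ^ (n * k))⁻¹) *
    ∑ X : Fin k → Fin n → ZMod p, ∏ i, MvPolynomial.X (applyLF p n k (L i) X)

/-! ### Auxiliary lemmas for Statement 6 -/

lemma abs_ep (p : ℕ) [NeZero p] (m : ZMod p) : ‖ep p m‖ = 1 := by
  have h : 2 * (Real.pi : ℂ) * Complex.I * (m.val : ℂ) / (p : ℂ)
      = ((2 * Real.pi * (m.val : ℝ) / (p : ℝ) : ℝ) : ℂ) * Complex.I := by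
    push_cast; ring
  rw [ep, h, Complex.norm_exp_ofReal_mul_I]

lemma aC_one_eq (p : ℕ) [NeZero p] (μ : ZMod p → ℝ) :
    aC p 1 μ = ∑ z : ZMod p, (μ z : ℂ) * ep p z := by
  simp [aC, one_mul]

lemma abs_aC_one_le (p : ℕ) [NeZero p] (μ : ZMod p → ℝ) (h0 : ∀ c, 0 ≤ μ c)
    (h1 : ∑ c, μ c = 1) : ‖aC p 1 μ‖ ≤ 1 := by
  rw [aC_one_eq]
  calc ‖∑ z : ZMod p, (μ z : ℂ) * ep p z‖
      ≤ ∑ z : ZMod p, ‖(μ z : ℂ) * ep p z‖ := norm_sum_le _ _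
    _ = ∑ z : ZMod p, μ z := by
        refine Finset.sum_congr rfl fun z _ => ?_
        rw [norm_mul, abs_ep, mul_one, Complex.norm_real, Real.norm_of_nonneg (h0 z)]
    _ = 1 := h1

lemma sup_mem_abs_sub_le {α : Type*} [Finite α] [Nonempty α] (S : Set α) (a b : α → ℝ)
    (ha : ∀ g, 0 ≤ a g) (hb : ∀ g, 0 ≤ b g) {δ : ℝ} (hδ : 0 ≤ δ)
    (h : ∀ g ∈ S, |a g - b g| ≤ δ) :
    |(⨆ g ∈ S, a g) - (⨆ g ∈ S, b g)| ≤ δ := by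
  have key : ∀ (a b : α → ℝ), (∀ g, 0 ≤ b g) → (∀ g ∈ S, a g - b g ≤ δ) →
      (⨆ g ∈ S, a g) ≤ (⨆ g ∈ S, b g) + δ := by
    intro a b hb h
    have hB : (0:ℝ) ≤ ⨆ g ∈ S, b g :=
      Real.iSup_nonneg fun g => Real.iSup_nonneg fun _ => hb g
    refine Real.iSup_le (fun g => ?_) (by linarith)
    by_cases hg : g ∈ S
    · rw [ciSup_pos hg]
      have h1 : b g ≤ ⨆ g ∈ S, b g := by
        have := le_ciSup (Finite.bddAbove_range fun g => ⨆ _ : g ∈ S, b g) g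
        rwa [ciSup_pos hg] at this
      have h2 := h g hg
      linarith
    · haveI : IsEmpty (g ∈ S) := ⟨fun hmem => hg hmem⟩
      rw [Real.iSup_of_isEmpty]
      linarith
  rw [abs_sub_le_iff]
  constructor
  · have := key a b hb fun g hg => by
      have := h g hg; rw [abs_sub_le_iff] at this; exact this.1
    linarith
  · have := key b a ha fun g hg => by
      have := h g hg; rw [abs_sub_le_iff] at this; exact this.2
    linarith

lemma exp_quad {y : ℝ} (hy : |y| ≤ 1) : Real.exp y ≤ 1 + y + (3/4) * y^2 := by
  have h := Real.exp_bound hy (n := 2) (by norm_num)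
  rw [show ∑ m ∈ Finset.range 2, y ^ m / (m.factorial : ℝ) = 1 + y by
    simp [Finset.sum_range_succ]] at h
  have h2 := (abs_le.mp h).2
  norm_num [Nat.factorial] at h2
  nlinarith [sq_abs y]

lemma probFun_nonneg (p : ℕ) [NeZero p] (n : ℕ) (Γ : (Fin n → ZMod p) → ZMod p → ℝ)
    (hΓ : IsDist p n Γ) (F : (Fin n → ZMod p) → ZMod p) : 0 ≤ probFun p n Γ F :=
  Finset.prod_nonneg fun x _ => hΓ.1 x (F x)

lemma chernoff (p : ℕ) [NeZero p] (n : ℕ) (Γ : (Fin n → ZMod p) → ZMod p → ℝ)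
    (hΓ : IsDist p n Γ) (u : (Fin n → ZMod p) → ZMod p → ℝ)
    (hb : ∀ x cc, |u x cc| ≤ 2) (h0 : ∀ x, ∑ cc, Γ x cc * u x cc = 0)
    {l : ℝ} (hl0 : 0 < l) (hl : l ≤ 1/2) (T : ℝ) :
    (∑ F : (Fin n → ZMod p) → ZMod p, probFun p n Γ F *
      (if T ≤ ∑ x, u x (F x) then (1:ℝ) else 0)) ≤
    Real.exp (-(l*T) + 3*l^2 * (Fintype.card (Fin n → ZMod p) : ℝ)) := by
  classical
  have hPnn : ∀ F, 0 ≤ probFun p n Γ F := probFun_nonneg p n Γ hΓ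
  have step1 : ∀ F : (Fin n → ZMod p) → ZMod p,
      probFun p n Γ F * (if T ≤ ∑ x, u x (F x) then (1:ℝ) else 0)
      ≤ probFun p n Γ F * Real.exp (l * ((∑ x, u x (F x)) - T)) := by
    intro F
    refine mul_le_mul_of_nonneg_left ?_ (hPnn F)
    split
    · next h => exact Real.one_le_exp (by nlinarith)
    · positivity
  have factor_le : ∀ x : Fin n → ZMod p,
      (∑ cc : ZMod p, Γ x cc * Real.exp (l * u x cc)) ≤ Real.exp (3 * l^2) := by
    intro x
    have hquad : ∀ cc, Real.exp (l * u x cc) ≤ 1 + l * u x cc + (3/4) * (l * u x cc)^2 := by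
      intro cc
      apply exp_quad
      rw [abs_mul, abs_of_pos hl0]
      calc l * |u x cc| ≤ (1/2) * 2 := mul_le_mul hl (hb x cc) (abs_nonneg _) (by norm_num)
        _ = 1 := by norm_num
    have hsq : (∑ cc, Γ x cc * (u x cc)^2) ≤ 4 := by
      calc ∑ cc, Γ x cc * (u x cc)^2 ≤ ∑ cc, Γ x cc * 4 :=
            Finset.sum_le_sum fun cc _ => mul_le_mul_of_nonneg_left
              (by nlinarith [hb x cc, abs_nonneg (u x cc), sq_abs (u x cc)]) (hΓ.1 x cc)
        _ = 4 := by rw [← Finset.sum_mul, hΓ.2 x, one_mul]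
    have hsqnn : (0:ℝ) ≤ ∑ cc, Γ x cc * (u x cc)^2 :=
      Finset.sum_nonneg fun cc _ => mul_nonneg (hΓ.1 x cc) (sq_nonneg _)
    calc (∑ cc, Γ x cc * Real.exp (l * u x cc))
        ≤ ∑ cc, Γ x cc * (1 + l * u x cc + (3/4) * (l * u x cc)^2) :=
          Finset.sum_le_sum fun cc _ => mul_le_mul_of_nonneg_left (hquad cc) (hΓ.1 x cc)
      _ = ∑ cc, (Γ x cc + l * (Γ x cc * u x cc) + (3/4) * l^2 * (Γ x cc * (u x cc)^2)) :=
          Finset.sum_congr rfl fun cc _ => by ring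
      _ = (∑ cc, Γ x cc) + l * (∑ cc, Γ x cc * u x cc)
          + (3/4) * l^2 * (∑ cc, Γ x cc * (u x cc)^2) := by
          rw [Finset.sum_add_distrib, Finset.sum_add_distrib, ← Finset.mul_sum, ← Finset.mul_sum]
      _ ≤ Real.exp (3 * l^2) := by
          rw [hΓ.2 x, h0 x, mul_zero, add_zero]
          have hexp : 3*l^2 + 1 ≤ Real.exp (3*l^2) := Real.add_one_le_exp _
          nlinarith [mul_nonneg (sq_nonneg l)
            (by linarith : (0:ℝ) ≤ 4 - ∑ cc, Γ x cc * (u x cc)^2)]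
  calc (∑ F : (Fin n → ZMod p) → ZMod p, probFun p n Γ F *
        (if T ≤ ∑ x, u x (F x) then (1:ℝ) else 0))
      ≤ ∑ F : (Fin n → ZMod p) → ZMod p,
          probFun p n Γ F * Real.exp (l * ((∑ x, u x (F x)) - T)) :=
        Finset.sum_le_sum fun F _ => step1 F
    _ = Real.exp (-(l*T)) * ∑ F : (Fin n → ZMod p) → ZMod p,
          ∏ x, (Γ x (F x) * Real.exp (l * u x (F x))) := by
        rw [Finset.mul_sum]
        refine Finset.sum_congr rfl fun F _ => ?_
        rw [Finset.prod_mul_distrib, ← Real.exp_sum]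
        rw [show l * ((∑ x, u x (F x)) - T) = (∑ x, l * u x (F x)) + -(l*T) from by
          rw [mul_sub, Finset.mul_sum]; ring]
        rw [Real.exp_add]
        unfold probFun
        ring
    _ = Real.exp (-(l*T)) * ∏ x, (∑ cc : ZMod p, Γ x cc * Real.exp (l * u x cc)) := by
        congr 1
        rw [Finset.prod_univ_sum, Fintype.piFinset_univ]
    _ ≤ Real.exp (-(l*T)) * ∏ x : Fin n → ZMod p, Real.exp (3*l^2) := by
        refine mul_le_mul_of_nonneg_left ?_ (Real.exp_pos _).le
        exact Finset.prod_le_prod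
          (fun x _ => Finset.sum_nonneg fun cc _ =>
            mul_nonneg (hΓ.1 x cc) (Real.exp_pos _).le)
          (fun x _ => factor_le x)
    _ = Real.exp (-(l*T) + 3*l^2 * (Fintype.card (Fin n → ZMod p) : ℝ)) := by
        rw [Finset.prod_const, Finset.card_univ, ← Real.exp_nat_mul, ← Real.exp_add]
        congr 1
        ring

set_option maxHeartbeats 2000000 in
/-- Claim: sampled functions have nearly the same correlation with `D` as
the distributional function. Let `D` be a proper dual family. For every `ε, η > 0` there is
`n₀` such that for all `n ≥ n₀` and every distributional function `Γ : F_p^n → P(F_p)`, the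
probability (over `F ∼ Γ`) that `|‖e_p(F)‖_{u(D_n)} − ‖e_p(Γ)‖_{u(D_n)}| ≥ ε` is at most `η`. -/
theorem statement6 (p : ℕ) [NeZero p] (hp : p.Prime)
    (D : ∀ n : ℕ, Set ((Fin n → ZMod p) → ZMod p))
    (hD : ProperDual p D) :
    ∀ ε : ℝ, 0 < ε → ∀ η : ℝ, 0 < η → ∃ n₀ : ℕ, ∀ n, n₀ ≤ n →
      ∀ Γ : (Fin n → ZMod p) → ZMod p → ℝ, IsDist p n Γ →
        (∑ F : (Fin n → ZMod p) → ZMod p, probFun p n Γ F *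
          (if ε ≤ |uNormF p n (D n) (fun x => ep p (F x)) -
                    uNormF p n (D n) (fun x => aC p 1 (Γ x))| then 1 else 0)) ≤ η := by
  intro ε hε η hη
  classical
  obtain ⟨hcons, haff, hsparse⟩ := hD
  set l : ℝ := min (ε/24) (1/2) with hl_def
  have hl0 : 0 < l := lt_min (by linarith) (by norm_num)
  have hl_half : l ≤ 1/2 := min_le_right _ _
  have hl_eps : l ≤ ε/24 := min_le_left _ _
  set c : ℝ := l * ε / 8 with hc_def
  have hc0 : 0 < c := by rw [hc_def]; positivity
  have hp2 : (2:ℝ) ≤ (p:ℝ) := by exact_mod_cast hp.two_le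
  have hp1 : (1:ℝ) < (p:ℝ) := by linarith
  have hlogp : 0 < Real.log p := Real.log_pos hp1
  obtain ⟨n₁, hn₁⟩ := hsparse (c / (2 * Real.log p)) (by positivity)
  have htail : Tendsto (fun m : ℕ => 4 * Real.exp (-(c/2 * (p:ℝ)^m))) atTop (nhds 0) := by
    have h1 : Tendsto (fun m : ℕ => (p:ℝ)^m) atTop atTop :=
      tendsto_pow_atTop_atTop_of_one_lt hp1
    have h2 : Tendsto (fun m : ℕ => c/2 * (p:ℝ)^m) atTop atTop :=
      h1.const_mul_atTop (by positivity)
    have h3 : Tendsto (fun m : ℕ => -(c/2 * (p:ℝ)^m)) atTop atBot :=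
      Filter.tendsto_neg_atBot_iff.mpr h2
    have h4 := Real.tendsto_exp_atBot.comp h3
    have h5 := h4.const_mul (4:ℝ)
    simpa using h5
  obtain ⟨n₂, hn₂⟩ := Filter.eventually_atTop.mp (htail.eventually_lt_const hη)
  refine ⟨max n₁ n₂, fun n hn Γ hΓ => ?_⟩
  have hn1 : n₁ ≤ n := le_trans (le_max_left _ _) hn
  have hn2 : n₂ ≤ n := le_trans (le_max_right _ _) hn
  set N : ℝ := (Fintype.card (Fin n → ZMod p) : ℝ) with hN_def
  have hcard : Fintype.card (Fin n → ZMod p) = p ^ n := by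
    simp [Fintype.card_fun, ZMod.card]
  have hNval : N = (p:ℝ)^n := by rw [hN_def, hcard]; push_cast; ring
  have hN0 : (0:ℝ) < N := by rw [hNval]; positivity
  set w : ((Fin n → ZMod p) → ZMod p) → (Fin n → ZMod p) → ZMod p → ℂ :=
    fun g x cc => (ep p cc - aC p 1 (Γ x)) * (starRingEnd ℂ) (ep p (g x)) with hw_def
  have hdiff : ∀ (g F : (Fin n → ZMod p) → ZMod p),
      inn p n (fun x => ep p (F x)) (fun x => ep p (g x)) -
      inn p n (fun x => aC p 1 (Γ x)) (fun x => ep p (g x)) =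
      (∑ x, w g x (F x)) / ((Fintype.card (Fin n → ZMod p) : ℂ)) := by
    intro g F
    simp only [inn, expC, hw_def]
    rw [div_sub_div_same, ← Finset.sum_sub_distrib]
    congr 1
    exact Finset.sum_congr rfl fun x _ => by ring
  have hsum1 : ∀ x, (∑ cc : ZMod p, (Γ x cc : ℂ)) = 1 := by
    intro x
    exact_mod_cast congrArg (Complex.ofReal) (hΓ.2 x)
  have hmean : ∀ g x, (∑ cc : ZMod p, (Γ x cc : ℂ) * w g x cc) = 0 := by
    intro g x
    have hsplit : (∑ cc : ZMod p, (Γ x cc : ℂ) * w g x cc)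
        = (∑ cc : ZMod p, (Γ x cc : ℂ) * ep p cc) * (starRingEnd ℂ) (ep p (g x))
          - (∑ cc : ZMod p, (Γ x cc : ℂ)) * (aC p 1 (Γ x) * (starRingEnd ℂ) (ep p (g x))) := by
      rw [Finset.sum_mul, Finset.sum_mul, ← Finset.sum_sub_distrib]
      exact Finset.sum_congr rfl fun cc _ => by simp only [hw_def]; ring
    rw [hsplit, ← aC_one_eq, hsum1 x, one_mul, sub_self]
  have hwabs : ∀ g x cc, ‖w g x cc‖ ≤ 2 := by
    intro g x cc
    simp only [hw_def]
    rw [norm_mul, Complex.norm_conj, abs_ep, mul_one]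
    calc ‖ep p cc - aC p 1 (Γ x)‖
        ≤ ‖ep p cc‖ + ‖aC p 1 (Γ x)‖ := by
          exact norm_sub_le _ _
      _ ≤ 1 + 1 := by
          rw [abs_ep]
          exact add_le_add le_rfl (abs_aC_one_le p (Γ x) (fun cc => hΓ.1 x cc) (hΓ.2 x))
      _ = 2 := by norm_num
  have hg_bound : ∀ g : (Fin n → ZMod p) → ZMod p,
      (∑ F : (Fin n → ZMod p) → ZMod p, probFun p n Γ F *
        (if ε/2 ≤ ‖inn p n (fun x => ep p (F x)) (fun x => ep p (g x)) -
            inn p n (fun x => aC p 1 (Γ x)) (fun x => ep p (g x))‖ then (1:ℝ) else 0))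
      ≤ 4 * Real.exp (-(c*N)) := by
    intro g
    set T : ℝ := ε * N / 4 with hT_def
    have hwre : ∀ x cc, |(w g x cc).re| ≤ 2 :=
      fun x cc => (Complex.abs_re_le_norm _).trans (hwabs g x cc)
    have hwim : ∀ x cc, |(w g x cc).im| ≤ 2 :=
      fun x cc => (Complex.abs_im_le_norm _).trans (hwabs g x cc)
    have h0re : ∀ x, (∑ cc, Γ x cc * (w g x cc).re) = 0 := by
      intro x
      have h := congrArg Complex.re (hmean g x)
      simpa [Complex.re_sum, Complex.mul_re] using h
    have h0im : ∀ x, (∑ cc, Γ x cc * (w g x cc).im) = 0 := by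
      intro x
      have h := congrArg Complex.im (hmean g x)
      simpa [Complex.im_sum, Complex.mul_im] using h
    have b1 := chernoff p n Γ hΓ (fun x cc => (w g x cc).re) hwre h0re hl0 hl_half T
    have b2 := chernoff p n Γ hΓ (fun x cc => -(w g x cc).re)
      (fun x cc => by rw [abs_neg]; exact hwre x cc)
      (fun x => by simp [mul_neg, Finset.sum_neg_distrib, h0re x]) hl0 hl_half T
    have b3 := chernoff p n Γ hΓ (fun x cc => (w g x cc).im) hwim h0im hl0 hl_half T
    have b4 := chernoff p n Γ hΓ (fun x cc => -(w g x cc).im)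
      (fun x cc => by rw [abs_neg]; exact hwim x cc)
      (fun x => by simp [mul_neg, Finset.sum_neg_distrib, h0im x]) hl0 hl_half T
    rw [← hN_def] at b1 b2 b3 b4
    have hind : ∀ F : (Fin n → ZMod p) → ZMod p,
        (if ε/2 ≤ ‖inn p n (fun x => ep p (F x)) (fun x => ep p (g x)) -
            inn p n (fun x => aC p 1 (Γ x)) (fun x => ep p (g x))‖ then (1:ℝ) else 0)
        ≤ (if T ≤ ∑ x, (w g x (F x)).re then (1:ℝ) else 0)
          + (if T ≤ ∑ x, -(w g x (F x)).re then (1:ℝ) else 0)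
          + (if T ≤ ∑ x, (w g x (F x)).im then (1:ℝ) else 0)
          + (if T ≤ ∑ x, -(w g x (F x)).im then (1:ℝ) else 0) := by
      intro F
      have i1 : (0:ℝ) ≤ if T ≤ ∑ x, (w g x (F x)).re then (1:ℝ) else 0 := by
        split <;> norm_num
      have i2 : (0:ℝ) ≤ if T ≤ ∑ x, -(w g x (F x)).re then (1:ℝ) else 0 := by
        split <;> norm_num
      have i3 : (0:ℝ) ≤ if T ≤ ∑ x, (w g x (F x)).im then (1:ℝ) else 0 := by
        split <;> norm_num
      have i4 : (0:ℝ) ≤ if T ≤ ∑ x, -(w g x (F x)).im then (1:ℝ) else 0 := by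
        split <;> norm_num
      by_cases hcnd : ε/2 ≤ ‖inn p n (fun x => ep p (F x)) (fun x => ep p (g x)) -
          inn p n (fun x => aC p 1 (Γ x)) (fun x => ep p (g x))‖
      · rw [if_pos hcnd]
        rw [hdiff g F, norm_div, Complex.norm_natCast, ← hN_def] at hcnd
        have h1 : ε/2 * N ≤ ‖∑ x, w g x (F x)‖ := (le_div_iff₀ hN0).mp hcnd
        have h2 := Complex.norm_le_abs_re_add_abs_im (∑ x, w g x (F x))
        have hre : (∑ x, w g x (F x)).re = ∑ x, (w g x (F x)).re := Complex.re_sum _ _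
        have him : (∑ x, w g x (F x)).im = ∑ x, (w g x (F x)).im := Complex.im_sum _ _
        have h3 : T ≤ |(∑ x, w g x (F x)).re| ∨ T ≤ |(∑ x, w g x (F x)).im| := by
          by_contra hcon
          push_neg at hcon
          have hTT : ε/2 * N = T + T := by rw [hT_def]; ring
          linarith [hcon.1, hcon.2]
        have h4 : (T ≤ ∑ x, (w g x (F x)).re) ∨ (T ≤ ∑ x, -(w g x (F x)).re)
            ∨ (T ≤ ∑ x, (w g x (F x)).im) ∨ (T ≤ ∑ x, -(w g x (F x)).im) := by
          rcases h3 with h | h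
          · rcases le_abs.mp h with h' | h'
            · exact Or.inl (by rw [← hre]; exact h')
            · exact Or.inr (Or.inl (by rw [Finset.sum_neg_distrib, ← hre]; exact h'))
          · rcases le_abs.mp h with h' | h'
            · exact Or.inr (Or.inr (Or.inl (by rw [← him]; exact h')))
            · exact Or.inr (Or.inr (Or.inr (by rw [Finset.sum_neg_distrib, ← him]; exact h')))
        rcases h4 with h | h | h | h
        · rw [if_pos h]; linarith
        · rw [if_pos h]; linarith
        · rw [if_pos h]; linarith
        · rw [if_pos h]; linarith
      · rw [if_neg hcnd]; linarith
    calc (∑ F : (Fin n → ZMod p) → ZMod p, probFun p n Γ F *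
          (if ε/2 ≤ ‖inn p n (fun x => ep p (F x)) (fun x => ep p (g x)) -
              inn p n (fun x => aC p 1 (Γ x)) (fun x => ep p (g x))‖ then (1:ℝ) else 0))
        ≤ ∑ F : (Fin n → ZMod p) → ZMod p, probFun p n Γ F *
            ((if T ≤ ∑ x, (w g x (F x)).re then (1:ℝ) else 0)
              + (if T ≤ ∑ x, -(w g x (F x)).re then (1:ℝ) else 0)
              + (if T ≤ ∑ x, (w g x (F x)).im then (1:ℝ) else 0)
              + (if T ≤ ∑ x, -(w g x (F x)).im then (1:ℝ) else 0)) :=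
          Finset.sum_le_sum fun F _ =>
            mul_le_mul_of_nonneg_left (hind F) (probFun_nonneg p n Γ hΓ F)
      _ = (∑ F : (Fin n → ZMod p) → ZMod p, probFun p n Γ F *
            (if T ≤ ∑ x, (w g x (F x)).re then (1:ℝ) else 0))
          + (∑ F : (Fin n → ZMod p) → ZMod p, probFun p n Γ F *
            (if T ≤ ∑ x, -(w g x (F x)).re then (1:ℝ) else 0))
          + (∑ F : (Fin n → ZMod p) → ZMod p, probFun p n Γ F *
            (if T ≤ ∑ x, (w g x (F x)).im then (1:ℝ) else 0))
          + (∑ F : (Fin n → ZMod p) → ZMod p, probFun p n Γ F *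
            (if T ≤ ∑ x, -(w g x (F x)).im then (1:ℝ) else 0)) := by
          simp only [mul_add, Finset.sum_add_distrib]
      _ ≤ 4 * Real.exp (-(l*T) + 3*l^2*N) := by linarith
      _ ≤ 4 * Real.exp (-(c*N)) := by
          have harg : -(l*T) + 3*l^2*N ≤ -(c*N) := by
            rw [hT_def, hc_def]
            nlinarith [mul_nonneg (mul_nonneg hl0.le
              (by linarith : (0:ℝ) ≤ ε/24 - l)) hN0.le]
          have := Real.exp_le_exp.mpr harg
          linarith
  have hDfin : (D n).Finite := Set.toFinite _
  have hpoint : ∀ F : (Fin n → ZMod p) → ZMod p,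
      (if ε ≤ |uNormF p n (D n) (fun x => ep p (F x)) -
          uNormF p n (D n) (fun x => aC p 1 (Γ x))| then (1:ℝ) else 0)
      ≤ ∑ g ∈ hDfin.toFinset,
          (if ε/2 ≤ ‖inn p n (fun x => ep p (F x)) (fun x => ep p (g x)) -
            inn p n (fun x => aC p 1 (Γ x)) (fun x => ep p (g x))‖ then (1:ℝ) else 0) := by
    intro F
    by_cases hF : ε ≤ |uNormF p n (D n) (fun x => ep p (F x)) -
        uNormF p n (D n) (fun x => aC p 1 (Γ x))|
    · rw [if_pos hF]
      have hex : ∃ g ∈ D n, ε/2 ≤ ‖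
          inn p n (fun x => ep p (F x)) (fun x => ep p (g x)) -
           inn p n (fun x => aC p 1 (Γ x)) (fun x => ep p (g x))‖ := by
        by_contra hcon
        push_neg at hcon
        have hle : ∀ g ∈ D n,
            |‖inn p n (fun x => ep p (F x)) (fun x => ep p (g x))‖ -
             ‖inn p n (fun x => aC p 1 (Γ x)) (fun x => ep p (g x))‖| ≤ ε/2 := by
          intro g hg
          calc |‖inn p n (fun x => ep p (F x)) (fun x => ep p (g x))‖ -
              ‖inn p n (fun x => aC p 1 (Γ x)) (fun x => ep p (g x))‖|
              ≤ ‖inn p n (fun x => ep p (F x)) (fun x => ep p (g x)) -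
                inn p n (fun x => aC p 1 (Γ x)) (fun x => ep p (g x))‖ := by
                exact abs_norm_sub_norm_le _ _
            _ ≤ ε/2 := (hcon g hg).le
        have hsup := sup_mem_abs_sub_le (D n)
          (fun g => ‖inn p n (fun x => ep p (F x)) (fun x => ep p (g x))‖)
          (fun g => ‖inn p n (fun x => aC p 1 (Γ x)) (fun x => ep p (g x))‖)
          (fun g => norm_nonneg _) (fun g => norm_nonneg _)
          (by linarith : (0:ℝ) ≤ ε/2) hle
        have hsup' : |uNormF p n (D n) (fun x => ep p (F x)) -
            uNormF p n (D n) (fun x => aC p 1 (Γ x))| ≤ ε/2 := hsup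
        linarith
      obtain ⟨g, hgD, hgge⟩ := hex
      have hg' : g ∈ hDfin.toFinset := hDfin.mem_toFinset.mpr hgD
      have hsum : ∀ f : ((Fin n → ZMod p) → ZMod p) → ℝ, (∀ i, 0 ≤ f i) →
          f g ≤ ∑ x ∈ hDfin.toFinset, f x :=
        fun f hf => Finset.single_le_sum (fun i _ => hf i) hg'
      have hkey := hsum (fun g => if ε/2 ≤ ‖
          inn p n (fun x => ep p (F x)) (fun x => ep p (g x)) -
           inn p n (fun x => aC p 1 (Γ x)) (fun x => ep p (g x))‖ then (1:ℝ) else 0)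
        (fun i => by split <;> norm_num)
      rw [if_pos hgge] at hkey
      exact hkey
    · rw [if_neg hF]
      exact Finset.sum_nonneg fun g _ => by split <;> norm_num
  calc (∑ F : (Fin n → ZMod p) → ZMod p, probFun p n Γ F *
        (if ε ≤ |uNormF p n (D n) (fun x => ep p (F x)) -
            uNormF p n (D n) (fun x => aC p 1 (Γ x))| then (1:ℝ) else 0))
      ≤ ∑ F : (Fin n → ZMod p) → ZMod p, probFun p n Γ F *
          ∑ g ∈ hDfin.toFinset,
            (if ε/2 ≤ ‖inn p n (fun x => ep p (F x)) (fun x => ep p (g x)) -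
              inn p n (fun x => aC p 1 (Γ x)) (fun x => ep p (g x))‖ then (1:ℝ) else 0) :=
        Finset.sum_le_sum fun F _ =>
          mul_le_mul_of_nonneg_left (hpoint F) (probFun_nonneg p n Γ hΓ F)
    _ = ∑ g ∈ hDfin.toFinset, ∑ F : (Fin n → ZMod p) → ZMod p, probFun p n Γ F *
          (if ε/2 ≤ ‖inn p n (fun x => ep p (F x)) (fun x => ep p (g x)) -
            inn p n (fun x => aC p 1 (Γ x)) (fun x => ep p (g x))‖ then (1:ℝ) else 0) := by
        simp_rw [Finset.mul_sum]
        rw [Finset.sum_comm]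
    _ ≤ ∑ _g ∈ hDfin.toFinset, 4 * Real.exp (-(c*N)) :=
        Finset.sum_le_sum fun g _ => hg_bound g
    _ = (hDfin.toFinset.card : ℝ) * (4 * Real.exp (-(c*N))) := by
        rw [Finset.sum_const, nsmul_eq_mul]
    _ ≤ (p:ℝ) ^ (c/(2*Real.log p) * (p:ℝ)^n) * (4 * Real.exp (-(c*N))) := by
        refine mul_le_mul_of_nonneg_right ?_ (by positivity)
        have hcard2 : (hDfin.toFinset.card : ℝ) = (Nat.card (D n) : ℝ) := by
          rw [Nat.card_coe_set_eq, Set.ncard_eq_toFinset_card (D n) hDfin]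
        rw [hcard2]
        exact hn₁ n hn1
    _ ≤ η := by
        rw [Real.rpow_def_of_pos (by positivity : (0:ℝ) < (p:ℝ))]
        have harg : Real.log p * (c/(2*Real.log p) * (p:ℝ)^n) = c/2 * N := by
          rw [hNval]; field_simp
        rw [harg]
        have hcomb : Real.exp (c/2*N) * (4 * Real.exp (-(c*N))) = 4 * Real.exp (-(c/2*N)) := by
          rw [mul_comm, mul_assoc, ← Real.exp_add,
            show -(c*N)+c/2*N = -(c/2*N) from by ring]
        rw [hcomb, hNval]
        exact (hn₂ n hn2).le


end Paper
end
end

section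
/- Let p be a prime, and let 𝓛_0^{M_0} and 𝓛_1^{M_1} be 1-flagged systems of linear forms over F_p such that both 𝓛_0 ∪ {M_0} and 𝓛_1 ∪ {M_1} are connected. Let 𝓛^M := 𝓛_0^{M_0} · 𝓛_1^{M_1} be their product. Then 𝓛 ∪ {M} is connected. -/
open Filter Topology

noncomputable section

namespace Paper

variable (p : ℕ) [NeZero p]

/-- Appending zeros on the right, as a linear map. -/
def appendLeftLin (p : ℕ) [NeZero p] (k₀ k₁ : ℕ) :
    (Fin k₀ → ZMod p) →ₗ[ZMod p] (Fin (k₀ + k₁) → ZMod p) where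
  toFun v := Fin.append v (0 : Fin k₁ → ZMod p)
  map_add' x y := by
    funext i
    refine Fin.addCases (fun i => ?_) (fun i => ?_) i <;>
      simp [Fin.append_left, Fin.append_right]
  map_smul' c x := by
    funext i
    refine Fin.addCases (fun i => ?_) (fun i => ?_) i <;>
      simp [Fin.append_left, Fin.append_right]

/-- Appending zeros on the left, as a linear map. -/
def appendRightLin (p : ℕ) [NeZero p] (k₀ k₁ : ℕ) :
    (Fin k₁ → ZMod p) →ₗ[ZMod p] (Fin (k₀ + k₁) → ZMod p) where
  toFun v := Fin.append (0 : Fin k₀ → ZMod p) v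
  map_add' x y := by
    funext i
    refine Fin.addCases (fun i => ?_) (fun i => ?_) i <;>
      simp [Fin.append_left, Fin.append_right]
  map_smul' c x := by
    funext i
    refine Fin.addCases (fun i => ?_) (fun i => ?_) i <;>
      simp [Fin.append_left, Fin.append_right]

/-- If a connected system `C` maps under an injective linear map `φ` into `S ∪ T'`,
hitting both `S` and its complement, then `span S ⊓ span T' ≠ ⊥`. -/
lemma aux_conn {p k k' : ℕ} [NeZero p]
    (φ : (Fin k → ZMod p) →ₗ[ZMod p] (Fin k' → ZMod p)) (hφ : Function.Injective φ)
    (C : Finset (Fin k → ZMod p)) (hC : ConnectedFinset p C)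
    (S T' : Finset (Fin k' → ZMod p))
    (h1 : ∀ v ∈ C, φ v ∉ S → φ v ∈ T')
    (h2 : ∃ v ∈ C, φ v ∈ S) (h3 : ∃ v ∈ C, φ v ∉ S) :
    Submodule.span (ZMod p) (S : Set (Fin k' → ZMod p)) ⊓
      Submodule.span (ZMod p) (T' : Set (Fin k' → ZMod p)) ≠ ⊥ := by
  classical
  set A := C.filter (fun v => φ v ∈ S) with hAdef
  have hsub : A ⊆ C := Finset.filter_subset _ _
  obtain ⟨v₂, hv₂C, hv₂⟩ := h2
  obtain ⟨v₃, hv₃C, hv₃⟩ := h3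
  have hne : A.Nonempty := ⟨v₂, Finset.mem_filter.mpr ⟨hv₂C, hv₂⟩⟩
  have hneq : A ≠ C := by
    intro h
    have hm : v₃ ∈ A := by rw [h]; exact hv₃C
    exact hv₃ (Finset.mem_filter.mp hm).2
  have hkey := hC A hsub hne hneq
  rw [Submodule.ne_bot_iff] at hkey
  obtain ⟨w, hw, hw0⟩ := hkey
  rw [Submodule.mem_inf] at hw
  rw [Submodule.ne_bot_iff]
  refine ⟨φ w, Submodule.mem_inf.mpr ⟨?_, ?_⟩, fun h => hw0 (hφ (by rw [h, map_zero]))⟩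
  · have hmem := Submodule.apply_mem_span_image_of_mem_span φ hw.1
    refine Submodule.span_mono ?_ hmem
    rintro x ⟨y, hy, rfl⟩
    exact (Finset.mem_filter.mp (Finset.mem_coe.mp hy)).2
  · have hmem := Submodule.apply_mem_span_image_of_mem_span φ hw.2
    refine Submodule.span_mono ?_ hmem
    rintro x ⟨y, hy, rfl⟩
    have hy' := Finset.mem_sdiff.mp (Finset.mem_coe.mp hy)
    exact h1 y hy'.1 (fun hs => hy'.2 (Finset.mem_filter.mpr ⟨hy'.1, hs⟩))

/-- Lemma 6.6: the product of connected 1-flagged systems is connected.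
Let `𝓛₀^{M₀}` and `𝓛₁^{M₁}` be 1-flagged systems of linear forms such that both
`𝓛₀ ∪ {M₀}` and `𝓛₁ ∪ {M₁}` are connected. Then for any choice of a nonzero flag `M` and a
surjective linear map `T` realizing the product `𝓛^M = 𝓛₀^{M₀} · 𝓛₁^{M₁}`, the system
`𝓛 ∪ {M}` is connected. -/
theorem statement15 (p : ℕ) [NeZero p] (hp : p.Prime) (k₀ k₁ : ℕ)
    (𝓛₀ : Finset (Fin k₀ → ZMod p)) (M₀ : Fin k₀ → ZMod p)
    (𝓛₁ : Finset (Fin k₁ → ZMod p)) (M₁ : Fin k₁ → ZMod p)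
    (hM₀ : M₀ ≠ 0) (hM₀span : M₀ ∈ Submodule.span (ZMod p) (𝓛₀ : Set (Fin k₀ → ZMod p)))
    (hM₁ : M₁ ≠ 0) (hM₁span : M₁ ∈ Submodule.span (ZMod p) (𝓛₁ : Set (Fin k₁ → ZMod p)))
    (hc₀ : ConnectedFinset p (insert M₀ 𝓛₀))
    (hc₁ : ConnectedFinset p (insert M₁ 𝓛₁))
    (M : Fin (k₀ + k₁ - 1) → ZMod p) (hM : M ≠ 0)
    (T : (Fin (k₀ + k₁) → ZMod p) →ₗ[ZMod p] (Fin (k₀ + k₁ - 1) → ZMod p))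
    (hTsurj : Function.Surjective T)
    (hT₀ : T (Fin.append M₀ (0 : Fin k₁ → ZMod p)) = M)
    (hT₁ : T (Fin.append (0 : Fin k₀ → ZMod p) M₁) = M) :
    ConnectedFinset p (insert M (productSystem p 𝓛₀ 𝓛₁ T)) := by
  classical
  haveI : Fact p.Prime := ⟨hp⟩
  have hk₀ : 0 < k₀ := by
    rcases Nat.eq_zero_or_pos k₀ with h | h
    · exact absurd (by subst h; exact funext fun i => i.elim0) hM₀
    · exact h
  have hk₁ : 0 < k₁ := by
    rcases Nat.eq_zero_or_pos k₁ with h | h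
    · exact absurd (by subst h; exact funext fun i => i.elim0) hM₁
    · exact h
  set φ₀ : (Fin k₀ → ZMod p) →ₗ[ZMod p] (Fin (k₀ + k₁ - 1) → ZMod p) :=
    T.comp (appendLeftLin p k₀ k₁) with hφ₀def
  set φ₁ : (Fin k₁ → ZMod p) →ₗ[ZMod p] (Fin (k₀ + k₁ - 1) → ZMod p) :=
    T.comp (appendRightLin p k₀ k₁) with hφ₁def
  have hφ₀app : ∀ v, φ₀ v = T (Fin.append v 0) := fun v => rfl
  have hφ₁app : ∀ v, φ₁ v = T (Fin.append 0 v) := fun v => rfl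
  -- the kernel of T
  set w : Fin (k₀ + k₁) → ZMod p :=
    Fin.append M₀ (0 : Fin k₁ → ZMod p) - Fin.append (0 : Fin k₀ → ZMod p) M₁ with hwdef
  have hwker : T w = 0 := by rw [hwdef, map_sub, hT₀, hT₁, sub_self]
  have hwne : w ≠ 0 := by
    obtain ⟨j, hj⟩ := Function.ne_iff.mp hM₀
    intro h
    apply hj
    have h2 := congrFun h (Fin.castAdd k₁ j)
    simpa [hwdef, Fin.append_left] using h2
  have hrank : Module.finrank (ZMod p) (LinearMap.ker T) = 1 := by
    have h1 := LinearMap.finrank_range_add_finrank_ker T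
    rw [LinearMap.range_eq_top.mpr hTsurj, finrank_top] at h1
    simp only [Module.finrank_pi, Fintype.card_fin] at h1
    omega
  have hker : LinearMap.ker T = Submodule.span (ZMod p) {w} := by
    symm
    apply Submodule.eq_of_le_of_finrank_eq
    · exact Submodule.span_le.mpr (by simp [hwker])
    · rw [finrank_span_singleton hwne, hrank]
  -- injectivity of the two embeddings
  have hinj₀ : Function.Injective φ₀ := by
    rw [← LinearMap.ker_eq_bot, Submodule.eq_bot_iff]
    intro v hv
    rw [LinearMap.mem_ker] at hv
    have hmem : Fin.append v (0 : Fin k₁ → ZMod p) ∈ LinearMap.ker T := hv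
    rw [hker, Submodule.mem_span_singleton] at hmem
    obtain ⟨c, hc⟩ := hmem
    have hc0 : c = 0 := by
      by_contra hcne
      obtain ⟨j, hj⟩ := Function.ne_iff.mp hM₁
      apply hj
      have h2 := congrFun hc (Fin.natAdd k₀ j)
      simp [hwdef, Fin.append_right] at h2
      rcases h2 with h | h
      · exact absurd h hcne
      · exact h
    rw [hc0, zero_smul] at hc
    funext j
    have h3 := congrFun hc.symm (Fin.castAdd k₁ j)
    simpa [Fin.append_left] using h3
  have hinj₁ : Function.Injective φ₁ := by
    rw [← LinearMap.ker_eq_bot, Submodule.eq_bot_iff]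
    intro v hv
    rw [LinearMap.mem_ker] at hv
    have hmem : Fin.append (0 : Fin k₀ → ZMod p) v ∈ LinearMap.ker T := hv
    rw [hker, Submodule.mem_span_singleton] at hmem
    obtain ⟨c, hc⟩ := hmem
    have hc0 : c = 0 := by
      by_contra hcne
      obtain ⟨j, hj⟩ := Function.ne_iff.mp hM₀
      apply hj
      have h2 := congrFun hc (Fin.castAdd k₁ j)
      simp [hwdef, Fin.append_left] at h2
      rcases h2 with h | h
      · exact absurd h hcne
      · exact h
    rw [hc0, zero_smul] at hc
    funext j
    have h3 := congrFun hc.symm (Fin.natAdd k₀ j)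
    simpa [Fin.append_right] using h3
  -- membership facts
  set 𝓣 := insert M (productSystem p 𝓛₀ 𝓛₁ T) with h𝓣def
  have hmem₀ : ∀ v ∈ insert M₀ 𝓛₀, φ₀ v ∈ 𝓣 := by
    intro v hv
    rcases Finset.mem_insert.mp hv with h | h
    · subst h
      rw [hφ₀app, hT₀]
      exact Finset.mem_insert_self _ _
    · refine Finset.mem_insert_of_mem ?_
      simp only [productSystem, Finset.mem_image, Finset.mem_union]
      exact ⟨Fin.append v 0, Or.inl ⟨v, h, rfl⟩, rfl⟩
  have hmem₁ : ∀ v ∈ insert M₁ 𝓛₁, φ₁ v ∈ 𝓣 := by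
    intro v hv
    rcases Finset.mem_insert.mp hv with h | h
    · subst h
      rw [hφ₁app, hT₁]
      exact Finset.mem_insert_self _ _
    · refine Finset.mem_insert_of_mem ?_
      simp only [productSystem, Finset.mem_image, Finset.mem_union]
      exact ⟨Fin.append 0 v, Or.inr ⟨v, h, rfl⟩, rfl⟩
  have htot : ∀ x ∈ 𝓣, (∃ v ∈ insert M₀ 𝓛₀, φ₀ v = x) ∨
      (∃ v ∈ insert M₁ 𝓛₁, φ₁ v = x) := by
    intro x hx
    rcases Finset.mem_insert.mp hx with h | h
    · exact Or.inl ⟨M₀, Finset.mem_insert_self _ _, by rw [hφ₀app, hT₀, h]⟩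
    · simp only [productSystem, Finset.mem_image, Finset.mem_union] at h
      obtain ⟨u, hu, rfl⟩ := h
      rcases hu with ⟨L, hL, rfl⟩ | ⟨L, hL, rfl⟩
      · exact Or.inl ⟨L, Finset.mem_insert_of_mem hL, rfl⟩
      · exact Or.inr ⟨L, Finset.mem_insert_of_mem hL, rfl⟩
  -- the connectivity argument
  intro S hS hSne hSneq
  by_cases hA : ∃ v ∈ insert M₀ 𝓛₀, φ₀ v ∈ S
  · by_cases hA' : ∃ v ∈ insert M₀ 𝓛₀, φ₀ v ∉ S
    · exact aux_conn φ₀ hinj₀ _ hc₀ S (𝓣 \ S)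
        (fun v hv hns => Finset.mem_sdiff.mpr ⟨hmem₀ v hv, hns⟩) hA hA'
    · -- all of image of C₀ lies in S; in particular M ∈ S
      push_neg at hA'
      have hMS : M ∈ S := by
        have := hA' M₀ (Finset.mem_insert_self _ _)
        rwa [hφ₀app, hT₀] at this
      by_cases hB' : ∃ v ∈ insert M₁ 𝓛₁, φ₁ v ∉ S
      · have hB : ∃ v ∈ insert M₁ 𝓛₁, φ₁ v ∈ S :=
          ⟨M₁, Finset.mem_insert_self _ _, by rw [hφ₁app, hT₁]; exact hMS⟩
        exact aux_conn φ₁ hinj₁ _ hc₁ S (𝓣 \ S)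
          (fun v hv hns => Finset.mem_sdiff.mpr ⟨hmem₁ v hv, hns⟩) hB hB'
      · -- then every element of 𝓣 is in S, contradiction with S ≠ 𝓣
        exfalso
        push_neg at hB'
        apply hSneq
        apply Finset.Subset.antisymm hS
        intro x hx
        rcases htot x hx with ⟨v, hv, rfl⟩ | ⟨v, hv, rfl⟩
        · exact hA' v hv
        · exact hB' v hv
  · -- no element of image of C₀ is in S; in particular M ∉ S
    push_neg at hA
    have hMS : M ∉ S := by
      have := hA M₀ (Finset.mem_insert_self _ _)
      rwa [hφ₀app, hT₀] at this
    by_cases hB : ∃ v ∈ insert M₁ 𝓛₁, φ₁ v ∈ S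
    · have hB' : ∃ v ∈ insert M₁ 𝓛₁, φ₁ v ∉ S :=
        ⟨M₁, Finset.mem_insert_self _ _, by rw [hφ₁app, hT₁]; exact hMS⟩
      exact aux_conn φ₁ hinj₁ _ hc₁ S (𝓣 \ S)
        (fun v hv hns => Finset.mem_sdiff.mpr ⟨hmem₁ v hv, hns⟩) hB hB'
    · -- then S is empty, contradiction
      exfalso
      push_neg at hB
      obtain ⟨s, hs⟩ := hSne
      rcases htot s (hS hs) with ⟨v, hv, rfl⟩ | ⟨v, hv, rfl⟩
      · exact hA v hv hs
      · exact hB v hv hs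

end Paper
end
end

section
/- Let p be a prime and let 𝓛_1, …, 𝓛_k be pairwise non-isomorphic connected systems of linear forms over F_p. Let P_1, …, P_k be polynomials of degree at most d in the variables {f(x) : x ∈ F_p^n} (i.e., elements of the polynomial ring over ℂ in these p^n variables). If n > d + max_{i∈[k]} dim(span(𝓛_i)) and dim(span(𝓛_i)) > d for every i ∈ [k], then the polynomial identity P_1(f)·t_{𝓛_1}(f) + … + P_k(f)·t_{𝓛_k}(f) ≡ 0 (as a formal polynomial in the variables {f(x)}) implies P_i ≡ 0 for every i ∈ [k]. -/
open Filter Topology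

noncomputable section

namespace Paper

variable (p : ℕ) [NeZero p]

section Aux17

open MvPolynomial Module Submodule

lemma aux17_prod_X_eq_monomial {σ R ι : Type*} [CommSemiring R] (s : Finset ι) (f : ι → σ) :
    (∏ l ∈ s, (X (f l) : MvPolynomial σ R)) = monomial (∑ l ∈ s, Finsupp.single (f l) 1) 1 := by
  induction s using Finset.cons_induction with
  | empty => simp
  | cons a s ha ih =>
      rw [Finset.prod_cons, ih, Finset.sum_cons]
      show monomial (Finsupp.single (f a) 1) (1:R) * _ = _
      rw [monomial_mul, one_mul]

variable {σ ι : Type*} [Fintype ι] [DecidableEq σ]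

lemma aux17_sum_single_apply (g : ι → σ) (x : σ) :
    (∑ l : ι, Finsupp.single (g l) (1:ℕ)) x = (Finset.univ.filter fun l => g l = x).card := by
  rw [Finsupp.finset_sum_apply, Finset.card_filter]
  refine Finset.sum_congr rfl fun l _ => ?_
  simp [Finsupp.single_apply]

lemma aux17_support_sum_single (g : ι → σ) :
    (∑ l : ι, Finsupp.single (g l) (1:ℕ)).support = Finset.univ.image g := by
  ext x
  simp only [Finsupp.mem_support_iff, aux17_sum_single_apply, ne_eq, Finset.card_eq_zero]
  rw [← ne_eq, ← Finset.nonempty_iff_ne_empty, Finset.filter_nonempty_iff]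
  simp [Finset.mem_image]

lemma aux17_degree_sum_single (g : ι → σ) :
    ((∑ l : ι, Finsupp.single (g l) (1:ℕ)).sum fun _ e => e) = Fintype.card ι := by
  rw [Finsupp.sum, aux17_support_sum_single]
  rw [show (Fintype.card ι) = (Finset.univ : Finset ι).card from rfl,
    Finset.card_eq_sum_card_image g Finset.univ]
  exact Finset.sum_congr rfl fun x _ => (aux17_sum_single_apply g x)

variable {K V₁ V₂ : Type*} [Field K] [AddCommGroup V₁] [Module K V₁] [AddCommGroup V₂] [Module K V₂]

lemma aux17_finrank_sup_of_disjoint [FiniteDimensional K V₂] (S T : Submodule K V₂) (h : S ⊓ T = ⊥) :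
    finrank K ↥(S ⊔ T) = finrank K S + finrank K T := by
  have h2 := Submodule.finrank_sup_add_finrank_inf_eq S T
  rw [h] at h2
  simpa using h2

lemma aux17_disjoint_of_finrank_sup [FiniteDimensional K V₂] (S T : Submodule K V₂)
    (h : finrank K S + finrank K T ≤ finrank K ↥(S ⊔ T)) : S ⊓ T = ⊥ := by
  have h2 := Submodule.finrank_sup_add_finrank_inf_eq S T
  have h3 : finrank K ↥(S ⊓ T) = 0 := by omega
  exact Submodule.finrank_eq_zero.mp h3

lemma aux17_inj_on_of_finrank_map [FiniteDimensional K V₁] (f : V₁ →ₗ[K] V₂) (U : Submodule K V₁)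
    (h : finrank K (U.map f) = finrank K U) : ∀ v ∈ U, f v = 0 → v = 0 := by
  have h2 := LinearMap.finrank_range_add_finrank_ker (f.domRestrict U)
  rw [LinearMap.range_domRestrict] at h2
  have hker : finrank K (LinearMap.ker (f.domRestrict U)) = 0 := by omega
  have hbot : LinearMap.ker (f.domRestrict U) = ⊥ := Submodule.finrank_eq_zero.mp hker
  intro v hv hf0
  have hmem : (⟨v, hv⟩ : U) ∈ LinearMap.ker (f.domRestrict U) := by
    simp [LinearMap.mem_ker, LinearMap.domRestrict_apply, hf0]
  rw [hbot, Submodule.mem_bot] at hmem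
  exact congrArg Subtype.val hmem

lemma aux17_exists_good_map [FiniteDimensional K V₁] [FiniteDimensional K V₂]
    (U : Submodule K V₁) (W : Submodule K V₂)
    (h : finrank K U + finrank K W ≤ finrank K V₂) :
    ∃ A : V₁ →ₗ[K] V₂, ∀ v ∈ U, A v ∈ W → v = 0 := by
  obtain ⟨Wc, hWc⟩ := Submodule.exists_isCompl W
  have hsum := Submodule.finrank_add_eq_of_isCompl hWc
  have hrank : finrank K U ≤ finrank K Wc := by omega
  obtain ⟨f, hf⟩ : ∃ f : U →ₗ[K] Wc, Function.Injective f := by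
    rcases Nat.eq_zero_or_pos (finrank K U) with h0 | hpos
    · have hUbot : U = ⊥ := Submodule.finrank_eq_zero.mp h0
      refine ⟨0, fun a b _ => ?_⟩
      haveI : Subsingleton U := by rw [hUbot]; infer_instance
      exact Subsingleton.elim a b
    · have hg : ∃ g : Fin (finrank K Wc) → Fin (finrank K U), Function.Surjective g := by
        refine ⟨fun t => if h : (t : ℕ) < finrank K U then ⟨t, h⟩ else ⟨0, hpos⟩, fun s => ?_⟩
        refine ⟨⟨(s : ℕ), lt_of_lt_of_le s.2 hrank⟩, ?_⟩
        simp [s.2]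
      obtain ⟨g, hg⟩ := hg
      refine ⟨((Module.finBasis K Wc).equivFun.symm.toLinearMap.comp
        ((LinearMap.funLeft K K g).comp (Module.finBasis K U).equivFun.toLinearMap)), ?_⟩
      rw [LinearMap.coe_comp, LinearMap.coe_comp, LinearEquiv.coe_coe, LinearEquiv.coe_coe]
      exact (Module.finBasis K Wc).equivFun.symm.injective.comp
        ((LinearMap.funLeft_injective_of_surjective K K g hg).comp
          (Module.finBasis K U).equivFun.injective)
  obtain ⟨Uc, hUc⟩ := Submodule.exists_isCompl U
  refine ⟨Wc.subtype.comp (f.comp (U.linearProjOfIsCompl Uc hUc)), fun v hv hAV => ?_⟩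
  have hproj : U.linearProjOfIsCompl Uc hUc v = ⟨v, hv⟩ :=
    Submodule.linearProjOfIsCompl_apply_left hUc ⟨v, hv⟩
  simp only [LinearMap.comp_apply, hproj, Submodule.subtype_apply] at hAV
  have hmem : ((f ⟨v, hv⟩ : Wc) : V₂) ∈ W ⊓ Wc := ⟨hAV, (f ⟨v, hv⟩).2⟩
  rw [hWc.inf_eq_bot, Submodule.mem_bot] at hmem
  have hz : f ⟨v, hv⟩ = 0 := ZeroMemClass.coe_eq_zero.mp hmem
  have h0 : (⟨v, hv⟩ : U) = 0 := hf (by rw [hz, map_zero])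
  exact congrArg Subtype.val h0

end Aux17

section Core17

open MvPolynomial Module Submodule Set

set_option maxHeartbeats 1000000 in
lemma core17
    (p : ℕ) [NeZero p] (hp : p.Prime) (k n d : ℕ) (kk mm : Fin k → ℕ)
    (L : ∀ i, Fin (mm i) → Fin (kk i) → ZMod p)
    (hinj : ∀ i, Function.Injective (L i))
    (hconn : ∀ i, ConnectedSystem p (kk i) (mm i) (L i))
    (hiso : ∀ i j, i ≠ j → ¬ SystemsIso p (L i) (L j))
    (P : Fin k → MvPolynomial (Fin n → ZMod p) ℂ)
    (hdeg : ∀ i, (P i).totalDegree ≤ d)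
    (hn : ∀ i, d + Module.finrank (ZMod p)
      (Submodule.span (ZMod p) (Set.range (L i))) < n)
    (hrank : ∀ i, d < Module.finrank (ZMod p)
      (Submodule.span (ZMod p) (Set.range (L i))))
    (hsum : (∑ i, P i * tLPoly p n (kk i) (mm i) (L i)) = 0)
    (j : Fin k) (ω : (Fin n → ZMod p) →₀ ℕ)
    (IH : ∀ (i : Fin k) (ω' : (Fin n → ZMod p) →₀ ℕ),
      Module.finrank (ZMod p) (Submodule.span (ZMod p) ((ω.support : Set (Fin n → ZMod p))))
        + Module.finrank (ZMod p) (Submodule.span (ZMod p) (Set.range (L j)))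
      < Module.finrank (ZMod p) (Submodule.span (ZMod p) ((ω'.support : Set (Fin n → ZMod p))))
        + Module.finrank (ZMod p) (Submodule.span (ZMod p) (Set.range (L i))) →
      MvPolynomial.coeff ω' (P i) = 0) :
    MvPolynomial.coeff ω (P j) = 0 := by
  classical
  haveI : Fact p.Prime := ⟨hp⟩
  by_contra hne
  -- degree bounds
  have hωmem : ω ∈ (P j).support := MvPolynomial.mem_support_iff.mpr hne
  have hωd : (ω.sum fun _ e => e) ≤ d := le_trans (MvPolynomial.le_totalDegree hωmem) (hdeg j)
  have hcard : ω.support.card ≤ ω.sum fun _ e => e := by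
    rw [Finsupp.sum, Finset.card_eq_sum_ones]
    exact Finset.sum_le_sum fun x hx => Nat.one_le_iff_ne_zero.mpr (Finsupp.mem_support_iff.mp hx)
  have hVd : Module.finrank (ZMod p)
      (Submodule.span (ZMod p) ((ω.support : Set (Fin n → ZMod p)))) ≤ d :=
    le_trans (le_trans (finrank_span_finset_le_card _) hcard) hωd
  -- systems are nonempty
  have hmm0 : ∀ i : Fin k, 0 < mm i := by
    intro i
    rcases Nat.eq_zero_or_pos (mm i) with h0 | h
    · exfalso
      have hre : Set.range (L i) = ∅ := by
        haveI : IsEmpty (Fin (mm i)) := by rw [h0]; infer_instance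
        exact Set.range_eq_empty _
      have h2 := hrank i
      rw [hre, Submodule.span_empty, finrank_bot] at h2
      omega
    · exact h
  -- the forms are nonzero
  have hLne : ∀ (i : Fin k) (l : Fin (mm i)), L i l ≠ 0 := by
    intro i l hL0
    rcases Nat.lt_or_ge 1 (mm i) with h2 | h1
    · have hS : ({l} : Finset (Fin (mm i))) ≠ Finset.univ := by
        intro hEq
        have hcardeq : ({l} : Finset (Fin (mm i))).card = Fintype.card (Fin (mm i)) := by
          rw [hEq, Finset.card_univ]
        simp only [Finset.card_singleton, Fintype.card_fin] at hcardeq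
        omega
      have hc := hconn i {l} (Finset.singleton_nonempty l) hS
      apply hc
      have himg : (L i) '' (({l} : Finset (Fin (mm i))) : Set (Fin (mm i))) = {0} := by
        simp [hL0]
      rw [himg, Submodule.span_zero_singleton, bot_inf_eq]
    · exfalso
      have hmmi : mm i = 1 := le_antisymm h1 (hmm0 i)
      have hre : Set.range (L i) = {0} := by
        ext y
        constructor
        · rintro ⟨l', rfl⟩
          have hl' : l' = l := by
            have hx1 := l'.2; have hx2 := l.2
            exact Fin.val_injective (by omega)
          subst hl'
          simp [hL0]
        · rintro rfl
          exact ⟨l, hL0⟩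
      have h2 := hrank i
      rw [hre, Submodule.span_zero_singleton, finrank_bot] at h2
      omega
  -- construct the generic map A
  obtain ⟨A, hA⟩ := aux17_exists_good_map (Submodule.span (ZMod p) (Set.range (L j)))
      (Submodule.span (ZMod p) ((ω.support : Set (Fin n → ZMod p))))
      (by
        rw [Module.finrank_pi, Fintype.card_fin]
        have h1 := hn j
        omega)
  set b : Fin (mm j) → (Fin n → ZMod p) := fun l => A (L j l) with hbdef
  set Db : (Fin n → ZMod p) →₀ ℕ := ∑ l, Finsupp.single (b l) 1 with hDbdef
  set bset : Finset (Fin n → ZMod p) := Finset.univ.image b with hbsetdef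
  set M : (Fin n → ZMod p) →₀ ℕ := ω + Db with hMdef
  have hLmem : ∀ l, L j l ∈ Submodule.span (ZMod p) (Set.range (L j)) :=
    fun l => Submodule.subset_span (Set.mem_range_self l)
  have hbinj : Function.Injective b := by
    intro l1 l2 h12
    have hsub : A (L j l1 - L j l2) = 0 := by
      rw [map_sub]
      show b l1 - b l2 = 0
      rw [h12, sub_self]
    have hmem : L j l1 - L j l2 ∈ Submodule.span (ZMod p) (Set.range (L j)) :=
      Submodule.sub_mem _ (hLmem l1) (hLmem l2)
    have h0 := hA _ hmem (by rw [hsub]; exact Submodule.zero_mem _)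
    exact hinj j (sub_eq_zero.mp h0)
  have hbnotV : ∀ l, b l ∉ Submodule.span (ZMod p) ((ω.support : Set (Fin n → ZMod p))) := by
    intro l hmem
    exact hLne j l (hA _ (hLmem l) hmem)
  have hDbsupp : Db.support = bset := aux17_support_sum_single b
  have hDb1 : ∀ l, Db (b l) = 1 := by
    intro l
    rw [hDbdef, aux17_sum_single_apply]
    rw [show (Finset.univ.filter fun l' => b l' = b l) = {l} from by ext l'; simp [hbinj.eq_iff]]
    simp
  have hDble1 : ∀ x, Db x ≤ 1 := by
    intro x
    by_cases hx : x ∈ bset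
    · obtain ⟨l, -, rfl⟩ := Finset.mem_image.mp hx
      rw [hDb1]
    · have h0 : Db x = 0 := Finsupp.notMem_support_iff.mp (by rw [hDbsupp]; exact hx)
      omega
  have hdisj : Disjoint ω.support bset := by
    rw [Finset.disjoint_left]
    intro x hx hxb
    obtain ⟨l, -, rfl⟩ := Finset.mem_image.mp hxb
    exact hbnotV l (Submodule.subset_span hx)
  have hMsupp : M.support = ω.support ∪ bset := by
    rw [hMdef, Finsupp.support_add_eq (by rw [hDbsupp]; exact hdisj), hDbsupp]
  have hrangeb : Set.range b = A '' Set.range (L j) := by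
    rw [show b = A ∘ (L j) from rfl, Set.range_comp]
  have hVWb : Submodule.span (ZMod p) ((ω.support : Set (Fin n → ZMod p)))
      ⊓ Submodule.span (ZMod p) ((bset : Set (Fin n → ZMod p))) = ⊥ := by
    rw [eq_bot_iff]
    rintro x ⟨hxV, hxW⟩
    rw [hbsetdef, Finset.coe_image, Finset.coe_univ, Set.image_univ, hrangeb,
      ← Submodule.map_span] at hxW
    obtain ⟨v, hv, rfl⟩ := hxW
    rw [Submodule.mem_bot, hA v hv hxV, map_zero]
  have hfrWb : Module.finrank (ZMod p)
      (Submodule.span (ZMod p) ((bset : Set (Fin n → ZMod p))))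
      = Module.finrank (ZMod p) (Submodule.span (ZMod p) (Set.range (L j))) := by
    rw [hbsetdef, Finset.coe_image, Finset.coe_univ, Set.image_univ, hrangeb,
      ← Submodule.map_span]
    have h2 := LinearMap.finrank_range_add_finrank_ker
      (A.domRestrict (Submodule.span (ZMod p) (Set.range (L j))))
    rw [LinearMap.range_domRestrict] at h2
    have hker : LinearMap.ker (A.domRestrict (Submodule.span (ZMod p) (Set.range (L j)))) = ⊥ := by
      rw [eq_bot_iff]
      rintro ⟨v, hv⟩ hkv
      rw [LinearMap.mem_ker, LinearMap.domRestrict_apply] at hkv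
      have hv0 : v = 0 := hA v hv (by rw [hkv]; exact Submodule.zero_mem _)
      simp [hv0]
    rw [hker, finrank_bot] at h2
    omega
  have hfrM : Module.finrank (ZMod p)
      (Submodule.span (ZMod p) ((M.support : Set (Fin n → ZMod p))))
      = Module.finrank (ZMod p)
        (Submodule.span (ZMod p) ((ω.support : Set (Fin n → ZMod p))))
      + Module.finrank (ZMod p) (Submodule.span (ZMod p) (Set.range (L j))) := by
    rw [hMsupp, Finset.coe_union, Submodule.span_union,
      aux17_finrank_sup_of_disjoint _ _ hVWb, hfrWb]
  -- the coefficient of M in the identity, expanded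
  have hco : (0:ℂ) = ∑ i : Fin k, (((p:ℂ)^(n * kk i))⁻¹) *
      ∑ X : Fin (kk i) → Fin n → ZMod p,
        (if (∑ l, Finsupp.single (applyLF p n (kk i) (L i l) X) 1) ≤ M
         then MvPolynomial.coeff (M - ∑ l, Finsupp.single (applyLF p n (kk i) (L i l) X) 1) (P i)
         else 0) := by
    have h0 : MvPolynomial.coeff M (∑ i, P i * tLPoly p n (kk i) (mm i) (L i)) = 0 := by
      rw [hsum]; simp
    rw [MvPolynomial.coeff_sum] at h0
    conv_lhs => rw [← h0]
    apply Finset.sum_congr rfl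
    intro i _
    have hrw : P i * tLPoly p n (kk i) (mm i) (L i)
        = MvPolynomial.C (((p:ℂ)^(n * kk i))⁻¹) * ∑ X : Fin (kk i) → Fin n → ZMod p,
            (P i * MvPolynomial.monomial (∑ l, Finsupp.single (applyLF p n (kk i) (L i l) X) 1) 1) := by
      simp only [tLPoly]
      rw [show (∑ X : Fin (kk i) → Fin n → ZMod p,
            ∏ l, MvPolynomial.X (applyLF p n (kk i) (L i l) X))
          = ∑ X : Fin (kk i) → Fin n → ZMod p,
            (MvPolynomial.monomial (∑ l, Finsupp.single (applyLF p n (kk i) (L i l) X) 1) (1:ℂ)) from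
        Finset.sum_congr rfl (fun X _ => aux17_prod_X_eq_monomial _ _)]
      rw [mul_left_comm, Finset.mul_sum]
    rw [hrw, MvPolynomial.coeff_C_mul, MvPolynomial.coeff_sum]
    congr 1
    apply Finset.sum_congr rfl
    intro X _
    rw [MvPolynomial.coeff_mul_monomial', mul_one]
  -- per-term analysis
  have hterm : ∀ (i : Fin k) (X : Fin (kk i) → Fin n → ZMod p),
      (if (∑ l, Finsupp.single (applyLF p n (kk i) (L i l) X) 1) ≤ M
       then MvPolynomial.coeff (M - ∑ l, Finsupp.single (applyLF p n (kk i) (L i l) X) 1) (P i)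
       else 0)
      = if (i = j ∧ (∑ l, Finsupp.single (applyLF p n (kk i) (L i l) X) 1) = Db)
        then MvPolynomial.coeff ω (P j) else 0 := by
    intro i X
    by_cases hle : (∑ l, Finsupp.single (applyLF p n (kk i) (L i l) X) 1) ≤ M
    swap
    · rw [if_neg hle, if_neg]
      rintro ⟨-, hDb'⟩
      exact hle (by rw [hDb', hMdef]; exact le_add_self)
    rw [if_pos hle]
    obtain ⟨A', hA'⟩ : ∃ A' : (Fin (kk i) → ZMod p) →ₗ[ZMod p] (Fin n → ZMod p),
        ∀ v : Fin (kk i) → ZMod p, A' v = ∑ s, v s • X s := by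
      refine ⟨⟨⟨fun v => ∑ s, v s • X s, fun v w => ?_⟩, fun c v => ?_⟩, fun v => rfl⟩
      · simp [add_smul, Finset.sum_add_distrib]
      · simp [Finset.smul_sum, smul_smul]
    set a : Fin (mm i) → (Fin n → ZMod p) := fun l => A' (L i l) with hadef
    have haeq : ∀ l, applyLF p n (kk i) (L i l) X = a l := fun l => (hA' (L i l)).symm
    set DX : (Fin n → ZMod p) →₀ ℕ :=
      ∑ l, Finsupp.single (applyLF p n (kk i) (L i l) X) 1 with hDXdef
    have hDXa : DX = ∑ l, Finsupp.single (a l) 1 := by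
      rw [hDXdef]; exact Finset.sum_congr rfl (fun l _ => by rw [haeq l])
    by_cases hc : MvPolynomial.coeff (M - DX) (P i) = 0
    · rw [hc]
      by_cases hcond : i = j ∧ DX = Db
      · rw [if_pos hcond]
        obtain ⟨hij', hDX'⟩ := hcond
        rw [hDX'] at hc
        rw [hMdef, add_tsub_cancel_right, hij'] at hc
        exact hc.symm
      · rw [if_neg hcond]
    -- main case : the coefficient is nonzero, extract all structure
    set ω' : (Fin n → ZMod p) →₀ ℕ := M - DX with hω'def
    have hDXsupp : DX.support = Finset.univ.image a := by
      rw [hDXa]; exact aux17_support_sum_single a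
    have hDXsuppM : DX.support ⊆ M.support := by
      intro x hx
      have h1 := Finsupp.le_def.mp hle x
      have h2 := Finsupp.mem_support_iff.mp hx
      exact Finsupp.mem_support_iff.mpr (by omega)
    have hMrec : ω' + DX = M := tsub_add_cancel_of_le hle
    have hω'supp : ω'.support ⊆ M.support := by
      intro x hx
      have h2 := Finsupp.mem_support_iff.mp hx
      rw [hω'def, Finsupp.tsub_apply] at h2
      exact Finsupp.mem_support_iff.mpr (by omega)
    have hMsub2 : M.support ⊆ ω'.support ∪ DX.support := by
      intro x hx
      have hxM : M x ≠ 0 := Finsupp.mem_support_iff.mp hx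
      by_cases h1 : DX x = 0
      · refine Finset.mem_union_left _ (Finsupp.mem_support_iff.mpr ?_)
        rw [hω'def, Finsupp.tsub_apply]
        omega
      · exact Finset.mem_union_right _ (Finsupp.mem_support_iff.mpr h1)
    have hrangea : Set.range a = A' '' Set.range (L i) := by
      rw [show a = A' ∘ (L i) from rfl, Set.range_comp]
    have hmapa : Submodule.span (ZMod p) ((DX.support : Set (Fin n → ZMod p)))
        = Submodule.map A' (Submodule.span (ZMod p) (Set.range (L i))) := by
      rw [hDXsupp, Finset.coe_image, Finset.coe_univ, Set.image_univ, hrangea,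
        Submodule.map_span]
    have hfr2 : Module.finrank (ZMod p)
        (Submodule.span (ZMod p) ((DX.support : Set (Fin n → ZMod p))))
        ≤ Module.finrank (ZMod p) (Submodule.span (ZMod p) (Set.range (L i))) := by
      rw [hmapa]; exact Submodule.finrank_map_le A' _
    have hfr1 : Module.finrank (ZMod p)
        (Submodule.span (ZMod p) ((M.support : Set (Fin n → ZMod p))))
        ≤ Module.finrank (ZMod p)
            (Submodule.span (ZMod p) ((ω'.support : Set (Fin n → ZMod p))))
          + Module.finrank (ZMod p)
            (Submodule.span (ZMod p) ((DX.support : Set (Fin n → ZMod p)))) := by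
      have hh : Submodule.span (ZMod p) ((M.support : Set (Fin n → ZMod p)))
          ≤ Submodule.span (ZMod p) ((ω'.support : Set (Fin n → ZMod p)))
            ⊔ Submodule.span (ZMod p) ((DX.support : Set (Fin n → ZMod p))) := by
        rw [← Submodule.span_union, ← Finset.coe_union]
        exact Submodule.span_mono (Finset.coe_subset.mpr hMsub2)
      have h4 := Submodule.finrank_sup_add_finrank_inf_eq
        (Submodule.span (ZMod p) ((ω'.support : Set (Fin n → ZMod p))))
        (Submodule.span (ZMod p) ((DX.support : Set (Fin n → ZMod p))))
      have h5 := Submodule.finrank_mono hh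
      omega
    have hub : Module.finrank (ZMod p)
        (Submodule.span (ZMod p) ((ω.support : Set (Fin n → ZMod p))))
        + Module.finrank (ZMod p) (Submodule.span (ZMod p) (Set.range (L j)))
        ≤ Module.finrank (ZMod p)
            (Submodule.span (ZMod p) ((ω'.support : Set (Fin n → ZMod p))))
          + Module.finrank (ZMod p) (Submodule.span (ZMod p) (Set.range (L i))) := by
      omega
    have heqm : Module.finrank (ZMod p)
          (Submodule.span (ZMod p) ((ω'.support : Set (Fin n → ZMod p))))
          + Module.finrank (ZMod p) (Submodule.span (ZMod p) (Set.range (L i)))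
        = Module.finrank (ZMod p)
          (Submodule.span (ZMod p) ((ω.support : Set (Fin n → ZMod p))))
          + Module.finrank (ZMod p) (Submodule.span (ZMod p) (Set.range (L j))) := by
      by_contra hlt'
      exact hc (IH i ω' (lt_of_le_of_ne hub (Ne.symm hlt')))
    have hfra : Module.finrank (ZMod p)
        (Submodule.span (ZMod p) ((DX.support : Set (Fin n → ZMod p))))
        = Module.finrank (ZMod p) (Submodule.span (ZMod p) (Set.range (L i))) := by
      omega
    have hA'inj : ∀ v ∈ Submodule.span (ZMod p) (Set.range (L i)), A' v = 0 → v = 0 := by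
      apply aux17_inj_on_of_finrank_map
      rw [← hmapa]; exact hfra
    -- partitions of the support
    have hQ1ω : DX.support \ bset ⊆ ω.support := by
      intro x hx
      rw [Finset.mem_sdiff] at hx
      have h6 := hDXsuppM hx.1
      rw [hMsupp, Finset.mem_union] at h6
      tauto
    have hP1ω : ω'.support \ bset ⊆ ω.support := by
      intro x hx
      rw [Finset.mem_sdiff] at hx
      have h6 := hω'supp hx.1
      rw [hMsupp, Finset.mem_union] at h6
      tauto
    have hMx1 : ∀ x ∈ bset, M x = 1 := by
      intro x hx
      have h1 : ω x = 0 := Finsupp.notMem_support_iff.mp (Finset.disjoint_right.mp hdisj hx)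
      obtain ⟨l, -, rfl⟩ := Finset.mem_image.mp hx
      rw [hMdef, Finsupp.add_apply, h1, hDb1 l]
    have hP2eq : bset \ DX.support = ω'.support ∩ bset := by
      ext x
      simp only [Finset.mem_sdiff, Finset.mem_inter]
      constructor
      · rintro ⟨hxb, hxD⟩
        refine ⟨Finsupp.mem_support_iff.mpr ?_, hxb⟩
        rw [hω'def, Finsupp.tsub_apply]
        have hD0 : DX x = 0 := Finsupp.notMem_support_iff.mp hxD
        rw [hD0, hMx1 x hxb]
        omega
      · rintro ⟨hxω', hxb⟩
        refine ⟨hxb, ?_⟩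
        intro hxD
        have h1 := Finsupp.mem_support_iff.mp hxD
        have h2 := Finsupp.le_def.mp hle x
        have h3 := hMx1 x hxb
        have h4 := Finsupp.mem_support_iff.mp hxω'
        rw [hω'def, Finsupp.tsub_apply] at h4
        omega
    have hQun : (DX.support \ bset) ∪ (DX.support ∩ bset) = DX.support :=
      Finset.sdiff_union_inter _ _
    have hPun : (ω'.support \ bset) ∪ (bset \ DX.support) = ω'.support := by
      rw [hP2eq]; exact Finset.sdiff_union_inter _ _
    have hbun : (bset \ DX.support) ∪ (DX.support ∩ bset) = bset := by
      ext x
      simp only [Finset.mem_union, Finset.mem_sdiff, Finset.mem_inter]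
      tauto
    have hωsub : ω.support ⊆ (ω'.support \ bset) ∪ (DX.support \ bset) := by
      intro x hx
      have hxb : x ∉ bset := Finset.disjoint_left.mp hdisj hx
      by_cases hxD : x ∈ DX.support
      · exact Finset.mem_union_right _ (Finset.mem_sdiff.mpr ⟨hxD, hxb⟩)
      · refine Finset.mem_union_left _
          (Finset.mem_sdiff.mpr ⟨Finsupp.mem_support_iff.mpr ?_, hxb⟩)
        rw [hω'def, Finsupp.tsub_apply]
        have hD0 : DX x = 0 := Finsupp.notMem_support_iff.mp hxD
        have hωx : ω x ≠ 0 := Finsupp.mem_support_iff.mp hx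
        have hDbx : Db x = 0 := Finsupp.notMem_support_iff.mp (by rw [hDbsupp]; exact hxb)
        have hMx : M x = ω x := by rw [hMdef, Finsupp.add_apply, hDbx, add_zero]
        omega
    have hdisjVW : ∀ (S T : Finset (Fin n → ZMod p)), S ⊆ ω.support → T ⊆ bset →
        Submodule.span (ZMod p) (S : Set (Fin n → ZMod p))
          ⊓ Submodule.span (ZMod p) (T : Set (Fin n → ZMod p)) = ⊥ := by
      intro S T h1 h2
      rw [eq_bot_iff, ← hVWb]
      exact inf_le_inf (Submodule.span_mono (Finset.coe_subset.mpr h1))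
        (Submodule.span_mono (Finset.coe_subset.mpr h2))
    have eV' : Module.finrank (ZMod p)
        (Submodule.span (ZMod p) ((ω'.support : Set (Fin n → ZMod p))))
        = Module.finrank (ZMod p)
            (Submodule.span (ZMod p) (((ω'.support \ bset : Finset _) : Set (Fin n → ZMod p))))
          + Module.finrank (ZMod p)
            (Submodule.span (ZMod p) (((bset \ DX.support : Finset _) : Set (Fin n → ZMod p)))) := by
      conv_lhs => rw [← hPun]
      rw [Finset.coe_union, Submodule.span_union]
      exact aux17_finrank_sup_of_disjoint _ _ (hdisjVW _ _ hP1ω Finset.sdiff_subset)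
    have eRi : Module.finrank (ZMod p)
        (Submodule.span (ZMod p) ((DX.support : Set (Fin n → ZMod p))))
        = Module.finrank (ZMod p)
            (Submodule.span (ZMod p) (((DX.support \ bset : Finset _) : Set (Fin n → ZMod p))))
          + Module.finrank (ZMod p)
            (Submodule.span (ZMod p) (((DX.support ∩ bset : Finset _) : Set (Fin n → ZMod p)))) := by
      conv_lhs => rw [← hQun]
      rw [Finset.coe_union, Submodule.span_union]
      exact aux17_finrank_sup_of_disjoint _ _ (hdisjVW _ _ hQ1ω Finset.inter_subset_right)
    have l1 : Module.finrank (ZMod p)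
        (Submodule.span (ZMod p) ((ω.support : Set (Fin n → ZMod p))))
        ≤ Module.finrank (ZMod p)
            (Submodule.span (ZMod p) (((ω'.support \ bset : Finset _) : Set (Fin n → ZMod p))))
          + Module.finrank (ZMod p)
            (Submodule.span (ZMod p) (((DX.support \ bset : Finset _) : Set (Fin n → ZMod p)))) := by
      have hh : Submodule.span (ZMod p) ((ω.support : Set (Fin n → ZMod p)))
          ≤ Submodule.span (ZMod p) (((ω'.support \ bset : Finset _) : Set (Fin n → ZMod p)))
            ⊔ Submodule.span (ZMod p) (((DX.support \ bset : Finset _) : Set (Fin n → ZMod p))) := by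
        rw [← Submodule.span_union, ← Finset.coe_union]
        exact Submodule.span_mono (Finset.coe_subset.mpr hωsub)
      have h4 := Submodule.finrank_sup_add_finrank_inf_eq
        (Submodule.span (ZMod p) (((ω'.support \ bset : Finset _) : Set (Fin n → ZMod p))))
        (Submodule.span (ZMod p) (((DX.support \ bset : Finset _) : Set (Fin n → ZMod p))))
      have h5 := Submodule.finrank_mono hh
      omega
    have l2 : Module.finrank (ZMod p)
        (Submodule.span (ZMod p) ((bset : Set (Fin n → ZMod p))))
        ≤ Module.finrank (ZMod p)
            (Submodule.span (ZMod p) (((bset \ DX.support : Finset _) : Set (Fin n → ZMod p))))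
          + Module.finrank (ZMod p)
            (Submodule.span (ZMod p) (((DX.support ∩ bset : Finset _) : Set (Fin n → ZMod p)))) := by
      have hh : Submodule.span (ZMod p) ((bset : Set (Fin n → ZMod p)))
          = Submodule.span (ZMod p) (((bset \ DX.support : Finset _) : Set (Fin n → ZMod p)))
            ⊔ Submodule.span (ZMod p) (((DX.support ∩ bset : Finset _) : Set (Fin n → ZMod p))) := by
        rw [← Submodule.span_union, ← Finset.coe_union, hbun]
      have h4 := Submodule.finrank_sup_add_finrank_inf_eq
        (Submodule.span (ZMod p) (((bset \ DX.support : Finset _) : Set (Fin n → ZMod p))))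
        (Submodule.span (ZMod p) (((DX.support ∩ bset : Finset _) : Set (Fin n → ZMod p))))
      rw [hh]
      omega
    have el2 : Module.finrank (ZMod p)
          (Submodule.span (ZMod p) (((bset \ DX.support : Finset _) : Set (Fin n → ZMod p))))
        + Module.finrank (ZMod p)
          (Submodule.span (ZMod p) (((DX.support ∩ bset : Finset _) : Set (Fin n → ZMod p))))
        = Module.finrank (ZMod p) (Submodule.span (ZMod p) (Set.range (L j))) := by
      omega
    have hpq : Submodule.span (ZMod p) (((bset \ DX.support : Finset _) : Set (Fin n → ZMod p)))
        ⊓ Submodule.span (ZMod p) (((DX.support ∩ bset : Finset _) : Set (Fin n → ZMod p))) = ⊥ := by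
      apply aux17_disjoint_of_finrank_sup
      have hh : Submodule.span (ZMod p) (((bset \ DX.support : Finset _) : Set (Fin n → ZMod p)))
          ⊔ Submodule.span (ZMod p) (((DX.support ∩ bset : Finset _) : Set (Fin n → ZMod p)))
          = Submodule.span (ZMod p) ((bset : Set (Fin n → ZMod p))) := by
        rw [← Submodule.span_union, ← Finset.coe_union, hbun]
      rw [hh, hfrWb]
      omega
    -- which forms of `L j` are used by the instance
    set Sb : Finset (Fin (mm j)) := Finset.univ.filter (fun l => b l ∈ DX.support) with hSbdef
    have hQ2img : ((DX.support ∩ bset : Finset _) : Set (Fin n → ZMod p))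
        = b '' ((Sb : Finset (Fin (mm j))) : Set (Fin (mm j))) := by
      ext x
      constructor
      · intro hx
        have hx' := Finset.mem_coe.mp hx
        rw [Finset.mem_inter] at hx'
        obtain ⟨l, -, rfl⟩ := Finset.mem_image.mp hx'.2
        exact ⟨l, Finset.mem_coe.mpr (Finset.mem_filter.mpr ⟨Finset.mem_univ _, hx'.1⟩), rfl⟩
      · rintro ⟨l, hl, rfl⟩
        have hl' := Finset.mem_filter.mp (Finset.mem_coe.mp hl)
        exact Finset.mem_coe.mpr (Finset.mem_inter.mpr
          ⟨hl'.2, Finset.mem_image_of_mem b (Finset.mem_univ l)⟩)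
    have hP2img : ((bset \ DX.support : Finset _) : Set (Fin n → ZMod p))
        = b '' ((Sbᶜ : Finset (Fin (mm j))) : Set (Fin (mm j))) := by
      ext x
      constructor
      · intro hx
        have hx' := Finset.mem_coe.mp hx
        rw [Finset.mem_sdiff] at hx'
        obtain ⟨l, -, rfl⟩ := Finset.mem_image.mp hx'.1
        refine ⟨l, Finset.mem_coe.mpr (Finset.mem_compl.mpr ?_), rfl⟩
        intro hmem
        exact hx'.2 (Finset.mem_filter.mp hmem).2
      · rintro ⟨l, hl, rfl⟩
        have hl' := Finset.mem_compl.mp (Finset.mem_coe.mp hl)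
        refine Finset.mem_coe.mpr (Finset.mem_sdiff.mpr
          ⟨Finset.mem_image_of_mem b (Finset.mem_univ l), ?_⟩)
        intro hmem
        exact hl' (Finset.mem_filter.mpr ⟨Finset.mem_univ _, hmem⟩)
    have hSbcases : Sb = Finset.univ ∨ Sb = ∅ := by
      by_contra hcon
      push_neg at hcon
      have hmeet := hconn j Sb hcon.2 hcon.1
      obtain ⟨v, hv, hvne⟩ := (Submodule.ne_bot_iff _).mp hmeet
      obtain ⟨hv1, hv2⟩ := Submodule.mem_inf.mp hv
      have hvU : v ∈ Submodule.span (ZMod p) (Set.range (L j)) :=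
        Submodule.span_mono (Set.image_subset_range _ _) hv1
      have hAv1 : A v ∈ Submodule.span (ZMod p)
          (((DX.support ∩ bset : Finset _) : Set (Fin n → ZMod p))) := by
        have h6 := Submodule.mem_map_of_mem (f := A) hv1
        rw [Submodule.map_span, Set.image_image] at h6
        rw [hQ2img]
        exact h6
      have hAv2 : A v ∈ Submodule.span (ZMod p)
          (((bset \ DX.support : Finset _) : Set (Fin n → ZMod p))) := by
        have h6 := Submodule.mem_map_of_mem (f := A) hv2
        rw [Submodule.map_span, Set.image_image] at h6
        rw [hP2img]
        exact h6
      have hAv0 : A v = 0 := by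
        have h7 := Submodule.mem_inf.mpr ⟨hAv2, hAv1⟩
        rw [hpq] at h7
        exact (Submodule.mem_bot _).mp h7
      exact hvne (hA v hvU (by rw [hAv0]; exact Submodule.zero_mem _))
    have hSbuniv : Sb = Finset.univ := by
      rcases hSbcases with h | h
      · exact h
      exfalso
      have hQ2emp : (DX.support ∩ bset : Finset _) = ∅ :=
        Finset.coe_eq_empty.mp (by rw [hQ2img, h]; simp)
      have h7 : Module.finrank (ZMod p) (Submodule.span (ZMod p)
          (((DX.support ∩ bset : Finset _) : Set (Fin n → ZMod p)))) = 0 := by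
        rw [hQ2emp]
        simp
      have h8 : Module.finrank (ZMod p) (Submodule.span (ZMod p)
          (((DX.support \ bset : Finset _) : Set (Fin n → ZMod p))))
          ≤ Module.finrank (ZMod p)
            (Submodule.span (ZMod p) ((ω.support : Set (Fin n → ZMod p)))) :=
        Submodule.finrank_mono (Submodule.span_mono (Finset.coe_subset.mpr hQ1ω))
      have h9 := hrank i
      omega
    have hbsubD : bset ⊆ DX.support := by
      intro x hx
      obtain ⟨l, -, rfl⟩ := Finset.mem_image.mp hx
      have hl : l ∈ Sb := by rw [hSbuniv]; exact Finset.mem_univ l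
      exact (Finset.mem_filter.mp hl).2
    -- which forms of `L i` land on the generic instance
    set Sa : Finset (Fin (mm i)) := Finset.univ.filter (fun l => a l ∈ bset) with hSadef
    have haD : ∀ l : Fin (mm i), a l ∈ DX.support := by
      intro l; rw [hDXsupp]; exact Finset.mem_image_of_mem a (Finset.mem_univ l)
    have hSacases : Sa = Finset.univ ∨ Sa = ∅ := by
      by_contra hcon
      push_neg at hcon
      have hmeet := hconn i Sa hcon.2 hcon.1
      obtain ⟨v, hv, hvne⟩ := (Submodule.ne_bot_iff _).mp hmeet
      obtain ⟨hv1, hv2⟩ := Submodule.mem_inf.mp hv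
      have hvU : v ∈ Submodule.span (ZMod p) (Set.range (L i)) :=
        Submodule.span_mono (Set.image_subset_range _ _) hv1
      have hAv1 : A' v ∈ Submodule.span (ZMod p) ((bset : Set (Fin n → ZMod p))) := by
        have h6 := Submodule.mem_map_of_mem (f := A') hv1
        rw [Submodule.map_span, Set.image_image] at h6
        refine Submodule.span_mono ?_ h6
        rintro x ⟨l, hl, rfl⟩
        have hl' := Finset.mem_filter.mp (Finset.mem_coe.mp hl)
        exact Finset.mem_coe.mpr hl'.2
      have hAv2 : A' v ∈ Submodule.span (ZMod p) ((ω.support : Set (Fin n → ZMod p))) := by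
        have h6 := Submodule.mem_map_of_mem (f := A') hv2
        rw [Submodule.map_span, Set.image_image] at h6
        refine Submodule.span_mono ?_ h6
        rintro x ⟨l, hl, rfl⟩
        have hl' := Finset.mem_compl.mp (Finset.mem_coe.mp hl)
        have h9 : a l ∉ bset := by
          intro hmem
          exact hl' (Finset.mem_filter.mpr ⟨Finset.mem_univ _, hmem⟩)
        have h8 := hDXsuppM (haD l)
        rw [hMsupp, Finset.mem_union] at h8
        rcases h8 with h8 | h8
        · exact Finset.mem_coe.mpr h8
        · exact absurd h8 h9
      have hAv0 : A' v = 0 := by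
        have h7 := Submodule.mem_inf.mpr ⟨hAv2, hAv1⟩
        rw [hVWb] at h7
        exact (Submodule.mem_bot _).mp h7
      exact hvne (hA'inj v hvU hAv0)
    have hDsubb : DX.support ⊆ bset := by
      rcases hSacases with h | h
      · rw [hDXsupp]
        intro x hx
        obtain ⟨l, -, rfl⟩ := Finset.mem_image.mp hx
        have hl : l ∈ Sa := by rw [h]; exact Finset.mem_univ l
        exact (Finset.mem_filter.mp hl).2
      · exfalso
        have hbne : (b ⟨0, hmm0 j⟩) ∈ bset := Finset.mem_image_of_mem b (Finset.mem_univ _)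
        have hxD := hbsubD hbne
        rw [hDXsupp] at hxD
        obtain ⟨l, -, hleq⟩ := Finset.mem_image.mp hxD
        have hl : l ∈ Sa := Finset.mem_filter.mpr ⟨Finset.mem_univ _, by rw [hleq]; exact hbne⟩
        rw [h] at hl
        exact absurd hl (Finset.notMem_empty l)
    have hsuppeq : DX.support = bset := Finset.Subset.antisymm hDsubb hbsubD
    have hDXDb : DX = Db := by
      ext x
      by_cases hx : x ∈ bset
      · have h1 : DX x ≤ M x := Finsupp.le_def.mp hle x
        rw [hMx1 x hx] at h1
        have h2 : DX x ≠ 0 := Finsupp.mem_support_iff.mp (by rw [hsuppeq]; exact hx)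
        have h3 : Db x = 1 := by
          obtain ⟨l, -, rfl⟩ := Finset.mem_image.mp hx
          exact hDb1 l
        omega
      · have h1 : DX x = 0 := Finsupp.notMem_support_iff.mp (by rw [hsuppeq]; exact hx)
        have h2 : Db x = 0 := Finsupp.notMem_support_iff.mp (by rw [hDbsupp]; exact hx)
        omega
    have hmmeq : mm i = mm j := by
      have h1 : (DX.sum fun _ e => e) = mm i := by
        rw [hDXa, aux17_degree_sum_single, Fintype.card_fin]
      have h2 : (Db.sum fun _ e => e) = mm j := by
        rw [hDbdef, aux17_degree_sum_single, Fintype.card_fin]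
      rw [hDXDb, h2] at h1
      omega
    -- build the bijection between the systems
    have hainb : ∀ l : Fin (mm i), ∃ l', b l' = a l := by
      intro l
      have h6 : a l ∈ bset := hDsubb (haD l)
      obtain ⟨l', -, h⟩ := Finset.mem_image.mp h6
      exact ⟨l', h⟩
    choose σf hσf using hainb
    have hainj : Function.Injective a := by
      intro l1 l2 h12
      by_contra hne'
      have hpair : ({l1, l2} : Finset (Fin (mm i))) ⊆
          Finset.univ.filter fun l' => a l' = a l1 := by
        intro t ht
        rcases Finset.mem_insert.mp ht with rfl | ht'
        · exact Finset.mem_filter.mpr ⟨Finset.mem_univ _, rfl⟩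
        · rw [Finset.mem_singleton] at ht'
          subst ht'
          exact Finset.mem_filter.mpr ⟨Finset.mem_univ _, h12.symm⟩
      have hcard2 : 2 ≤ (Finset.univ.filter fun l' => a l' = a l1).card := by
        have hc2 := Finset.card_le_card hpair
        rw [Finset.card_pair hne'] at hc2
        exact hc2
      have hDx : DX (a l1) = (Finset.univ.filter fun l' => a l' = a l1).card := by
        rw [hDXa]; exact aux17_sum_single_apply a (a l1)
      have hle1 : DX (a l1) ≤ 1 := by rw [hDXDb]; exact hDble1 _
      omega
    have hσinj : Function.Injective σf := by
      intro l1 l2 h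
      apply hainj
      rw [← hσf l1, ← hσf l2, h]
    have hσbij : Function.Bijective σf :=
      (Fintype.bijective_iff_injective_and_card σf).mpr ⟨hσinj, by simp [hmmeq]⟩
    have hsys : SystemsIso p (L i) (L j) := by
      refine ⟨Equiv.ofBijective σf hσbij, fun c => ?_⟩
      show (∑ l, c l • L i l) = 0 ↔ (∑ l, c l • L j (σf l)) = 0
      have hkey : A' (∑ l, c l • L i l) = A (∑ l, c l • L j (σf l)) := by
        rw [map_sum, map_sum]
        refine Finset.sum_congr rfl fun l _ => ?_
        rw [map_smul, map_smul]
        congr 1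
        show a l = A (L j (σf l))
        rw [← hσf l]
      constructor
      · intro h0
        have h1 : A (∑ l, c l • L j (σf l)) = 0 := by rw [← hkey, h0, map_zero]
        have h2 : (∑ l, c l • L j (σf l)) ∈ Submodule.span (ZMod p) (Set.range (L j)) :=
          Submodule.sum_mem _ fun l _ =>
            Submodule.smul_mem _ _ (Submodule.subset_span (Set.mem_range_self _))
        exact hA _ h2 (by rw [h1]; exact Submodule.zero_mem _)
      · intro h0
        have h1 : A' (∑ l, c l • L i l) = 0 := by rw [hkey, h0, map_zero]
        have h2 : (∑ l, c l • L i l) ∈ Submodule.span (ZMod p) (Set.range (L i)) :=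
          Submodule.sum_mem _ fun l _ =>
            Submodule.smul_mem _ _ (Submodule.subset_span (Set.mem_range_self _))
        exact hA'inj _ h2 h1
    have hij' : i = j := by
      by_contra hij''
      exact hiso i j hij'' hsys
    rw [if_pos ⟨hij', hDXDb⟩]
    have hω'eq : ω' = ω := by
      rw [hω'def, hDXDb, hMdef, add_tsub_cancel_right]
    rw [hω'eq, hij']
  -- conclude
  simp only [hterm] at hco
  rw [Finset.sum_eq_single j] at hco
  rotate_left
  · intro i _ hij
    apply mul_eq_zero_of_right
    apply Finset.sum_eq_zero
    intro X _
    rw [if_neg]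
    rintro ⟨h1, -⟩
    exact hij h1
  · intro h
    exact absurd (Finset.mem_univ j) h
  have hXcount : (∑ X : Fin (kk j) → Fin n → ZMod p,
        if (j = j ∧ (∑ l, Finsupp.single (applyLF p n (kk j) (L j l) X) 1) = Db)
        then MvPolynomial.coeff ω (P j) else 0)
      = ((Finset.univ.filter (fun X : Fin (kk j) → Fin n → ZMod p =>
          (∑ l, Finsupp.single (applyLF p n (kk j) (L j l) X) 1) = Db)).card : ℂ)
        * MvPolynomial.coeff ω (P j) := by
    have hsimp : ∀ X : Fin (kk j) → Fin n → ZMod p,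
        (if (j = j ∧ (∑ l, Finsupp.single (applyLF p n (kk j) (L j l) X) 1) = Db)
         then MvPolynomial.coeff ω (P j) else 0)
        = if ((∑ l, Finsupp.single (applyLF p n (kk j) (L j l) X) 1) = Db)
          then MvPolynomial.coeff ω (P j) else 0 := by
      intro X; simp
    rw [Finset.sum_congr rfl (fun X _ => hsimp X), ← Finset.sum_filter, Finset.sum_const,
      nsmul_eq_mul]
  -- the witness X₀
  have happ0 : ∀ l, applyLF p n (kk j) (L j l) (fun s => A (Pi.single s (1 : ZMod p))) = b l := by
    intro l
    show (∑ s : Fin (kk j), (L j l) s • A ((Pi.single s 1 : Fin (kk j) → ZMod p))) = A (L j l)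
    calc (∑ s : Fin (kk j), (L j l) s • A ((Pi.single s 1 : Fin (kk j) → ZMod p)))
        = ∑ s : Fin (kk j), A ((L j l) s • (Pi.single s 1 : Fin (kk j) → ZMod p)) := by
          refine Finset.sum_congr rfl fun s _ => ?_
          rw [map_smul]
      _ = A (∑ s : Fin (kk j), (L j l) s • (Pi.single s 1 : Fin (kk j) → ZMod p)) :=
          (map_sum A _ _).symm
      _ = A (L j l) := by
          congr 1
          have h1 : ∀ s : Fin (kk j), (L j l) s • (Pi.single s 1 : Fin (kk j) → ZMod p)
              = Pi.single s ((L j l) s) := by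
            intro s; rw [← Pi.single_smul, smul_eq_mul, mul_one]
          rw [Finset.sum_congr rfl (fun s _ => h1 s), Finset.univ_sum_single]
  have hX0mem : (fun s => A (Pi.single s (1 : ZMod p))) ∈
      Finset.univ.filter (fun X : Fin (kk j) → Fin n → ZMod p =>
        (∑ l, Finsupp.single (applyLF p n (kk j) (L j l) X) 1) = Db) := by
    rw [Finset.mem_filter]
    exact ⟨Finset.mem_univ _, by
      rw [hDbdef]; exact Finset.sum_congr rfl fun l _ => by rw [happ0 l]⟩
  have hcnt : (((Finset.univ.filter (fun X : Fin (kk j) → Fin n → ZMod p =>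
      (∑ l, Finsupp.single (applyLF p n (kk j) (L j l) X) 1) = Db)).card : ℂ)) ≠ 0 :=
    Nat.cast_ne_zero.mpr (Nat.pos_iff_ne_zero.mp (Finset.card_pos.mpr ⟨_, hX0mem⟩))
  have hcj : (((p:ℂ)^(n * kk j))⁻¹) ≠ 0 :=
    inv_ne_zero (pow_ne_zero _ (Nat.cast_ne_zero.mpr (NeZero.ne p)))
  rw [hXcount] at hco
  exact (mul_ne_zero hcj (mul_ne_zero hcnt hne)) hco.symm

lemma key17
    (p : ℕ) [NeZero p] (hp : p.Prime) (k n d : ℕ) (kk mm : Fin k → ℕ)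
    (L : ∀ i, Fin (mm i) → Fin (kk i) → ZMod p)
    (hinj : ∀ i, Function.Injective (L i))
    (hconn : ∀ i, ConnectedSystem p (kk i) (mm i) (L i))
    (hiso : ∀ i j, i ≠ j → ¬ SystemsIso p (L i) (L j))
    (P : Fin k → MvPolynomial (Fin n → ZMod p) ℂ)
    (hdeg : ∀ i, (P i).totalDegree ≤ d)
    (hn : ∀ i, d + Module.finrank (ZMod p)
      (Submodule.span (ZMod p) (Set.range (L i))) < n)
    (hrank : ∀ i, d < Module.finrank (ZMod p)
      (Submodule.span (ZMod p) (Set.range (L i))))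
    (hsum : (∑ i, P i * tLPoly p n (kk i) (mm i) (L i)) = 0) :
    ∀ (c : ℕ) (j : Fin k) (ω : (Fin n → ZMod p) →₀ ℕ),
      d + (Finset.univ.sup fun i => Module.finrank (ZMod p)
          (Submodule.span (ZMod p) (Set.range (L i)))) + 1
        ≤ Module.finrank (ZMod p)
            (Submodule.span (ZMod p) ((ω.support : Set (Fin n → ZMod p))))
          + Module.finrank (ZMod p) (Submodule.span (ZMod p) (Set.range (L j))) + c →
      MvPolynomial.coeff ω (P j) = 0 := by
  haveI : Fact p.Prime := ⟨hp⟩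
  intro c
  induction c with
  | zero =>
    intro j ω h
    by_contra hne
    have hωd : (ω.sum fun _ e => e) ≤ d :=
      le_trans (MvPolynomial.le_totalDegree (MvPolynomial.mem_support_iff.mpr hne)) (hdeg j)
    have hcard : ω.support.card ≤ ω.sum fun _ e => e := by
      rw [Finsupp.sum, Finset.card_eq_sum_ones]
      exact Finset.sum_le_sum fun x hx =>
        Nat.one_le_iff_ne_zero.mpr (Finsupp.mem_support_iff.mp hx)
    have hVd : Module.finrank (ZMod p)
        (Submodule.span (ZMod p) ((ω.support : Set (Fin n → ZMod p)))) ≤ d :=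
      le_trans (le_trans (finrank_span_finset_le_card _) hcard) hωd
    have hrj : Module.finrank (ZMod p) (Submodule.span (ZMod p) (Set.range (L j)))
        ≤ Finset.univ.sup fun i => Module.finrank (ZMod p)
          (Submodule.span (ZMod p) (Set.range (L i))) :=
      Finset.le_sup (f := fun i => Module.finrank (ZMod p)
        (Submodule.span (ZMod p) (Set.range (L i)))) (Finset.mem_univ j)
    omega
  | succ c ihc =>
    intro j ω h
    by_cases h' : d + (Finset.univ.sup fun i => Module.finrank (ZMod p)
          (Submodule.span (ZMod p) (Set.range (L i)))) + 1
        ≤ Module.finrank (ZMod p)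
            (Submodule.span (ZMod p) ((ω.support : Set (Fin n → ZMod p))))
          + Module.finrank (ZMod p) (Submodule.span (ZMod p) (Set.range (L j))) + c
    · exact ihc j ω h'
    · refine core17 p hp k n d kk mm L hinj hconn hiso P hdeg hn hrank hsum j ω ?_
      intro i ω' hlt
      refine ihc i ω' ?_
      omega

/-- Lemma 6.8: formal independence of `t_𝓛` over low-degree polynomials.
Let `𝓛_1, …, 𝓛_k` be pairwise non-isomorphic connected systems of linear forms, and let
`P_1, …, P_k` be polynomials of degree at most `d` in the variables `{f(x) : x ∈ F_p^n}`.
If `n > d + max_i dim span(𝓛_i)` and `dim span(𝓛_i) > d` for all `i`, then the formal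
identity `Σ_i P_i · t_{𝓛_i} = 0` forces `P_i = 0` for all `i`. -/
theorem statement17 (p : ℕ) [NeZero p] (hp : p.Prime) (k n d : ℕ) (kk mm : Fin k → ℕ)
    (L : ∀ i, Fin (mm i) → Fin (kk i) → ZMod p)
    (hinj : ∀ i, Function.Injective (L i))
    (hconn : ∀ i, ConnectedSystem p (kk i) (mm i) (L i))
    (hiso : ∀ i j, i ≠ j → ¬ SystemsIso p (L i) (L j))
    (P : Fin k → MvPolynomial (Fin n → ZMod p) ℂ)
    (hdeg : ∀ i, (P i).totalDegree ≤ d)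
    (hn : ∀ i, d + Module.finrank (ZMod p)
      (Submodule.span (ZMod p) (Set.range (L i))) < n)
    (hrank : ∀ i, d < Module.finrank (ZMod p)
      (Submodule.span (ZMod p) (Set.range (L i)))) :
    (∑ i, P i * tLPoly p n (kk i) (mm i) (L i)) = 0 → ∀ i, P i = 0 := by
  intro hs i
  apply MvPolynomial.ext
  intro ω
  rw [MvPolynomial.coeff_zero]
  exact key17 p hp k n d kk mm L hinj hconn hiso P hdeg hn hrank hs
    (d + (Finset.univ.sup fun i => Module.finrank (ZMod p)
      (Submodule.span (ZMod p) (Set.range (L i)))) + 1) i ω (by omega)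


end Core17

end Paper
end
end
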